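/- arXiv:2602.05761 — 7 statements merged into one kernel-verified Lean document; each statement's English description precedes it below -/
import Mathlib

section
/- Let k be a field of characteristic 2, let S = k[x_{ij} : 1 ≤ i ≤ j ≤ n] be the polynomial ring in the entries of a generic symmetric n×n matrix (i.e., with x_{ji} identified with x_{ij} for i < j), and let f = det(x_{ij}) be the determinant of this symmetric matrix. Then f is congruent to the product x_{11}·x_{22}·⋯·x_{nn} of the diagonal entries modulo the ideal generated by all squares x_{ij}^2 of the variables. -/
open MvPolynomial

set_option maxHeartbeats 1000000 in
set_option synthInstance.maxHeartbeats 100000 in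
/-- In characteristic 2, the determinant of the generic symmetric `n × n` matrix is congruent
to the product of the diagonal variables modulo the ideal generated by the squares of all the
variables. The polynomial ring has variables `x_{ij}` for `i ≤ j`, and the `(i,j)`-entry of the
symmetric matrix is `x_{min(i,j), max(i,j)}`. -/
theorem stmt_0 (k : Type*) [Field k] [CharP k 2] (n : ℕ)
    (M : Matrix (Fin n) (Fin n)
      (MvPolynomial {ij : Fin n × Fin n // ij.1 ≤ ij.2} k))
    (hM : ∀ i j, M i j = X ⟨(min i j, max i j), min_le_max⟩) :
    M.det - ∏ i : Fin n, X (⟨(i, i), le_rfl⟩ : {ij : Fin n × Fin n // ij.1 ≤ ij.2}) ∈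
      Ideal.span (Set.range fun v : {ij : Fin n × Fin n // ij.1 ≤ ij.2} =>
        (X v : MvPolynomial {ij : Fin n × Fin n // ij.1 ≤ ij.2} k) ^ 2) := by
  classical
  let I : Ideal (MvPolynomial {ij : Fin n × Fin n // ij.1 ≤ ij.2} k) :=
    Ideal.span (Set.range fun v : {ij : Fin n × Fin n // ij.1 ≤ ij.2} =>
      (X v : MvPolynomial {ij : Fin n × Fin n // ij.1 ≤ ij.2} k) ^ 2)
  show M.det - _ ∈ I
  have hsymm : ∀ i j, M i j = M j i := by
    intro i j
    rw [hM, hM]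
    exact congrArg X (Subtype.ext (by simp [min_comm, max_comm]))
  rw [← Ideal.Quotient.eq]
  have h2 : ∀ x : MvPolynomial {ij : Fin n × Fin n // ij.1 ≤ ij.2} k, x + x = 0 :=
    fun x => CharTwo.add_self_eq_zero x
  have hdet : M.det = ∑ σ : Equiv.Perm (Fin n), ∏ i, M (σ i) i := by
    rw [Matrix.det_apply]
    refine Finset.sum_congr rfl fun σ _ => ?_
    rcases Int.units_eq_one_or (Equiv.Perm.sign σ) with h | h <;>
      simp [h, CharTwo.neg_eq]
  have hinv : ∀ σ : Equiv.Perm (Fin n),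
      (∏ i, M (σ⁻¹ i) i) = ∏ i, M (σ i) i := by
    intro σ
    calc (∏ i, M (σ⁻¹ i) i) = ∏ i, M (σ⁻¹ (σ i)) (σ i) :=
          (Equiv.prod_comp σ fun x => M (σ⁻¹ x) x).symm
    _ = ∏ i, M i (σ i) := by simp
    _ = ∏ i, M (σ i) i := Finset.prod_congr rfl fun i _ => hsymm i (σ i)
  have hterm : ∀ σ : Equiv.Perm (Fin n), σ⁻¹ = σ → σ ≠ 1 →
      (∏ i, M (σ i) i) ∈ I := by
    intro σ hσ hσ1
    obtain ⟨i, hi⟩ : ∃ i, σ i ≠ i := by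
      by_contra h
      push_neg at h
      exact hσ1 (Equiv.ext h)
    set j := σ i with hj
    have hji : σ j = i := by
      show σ (σ i) = i
      nth_rewrite 1 [← hσ]
      exact σ.symm_apply_apply i
    have hij : j ≠ i := hi
    have hmem : j ∈ (Finset.univ : Finset (Fin n)).erase i :=
      Finset.mem_erase.2 ⟨hij, Finset.mem_univ j⟩
    rw [← Finset.mul_prod_erase Finset.univ _ (Finset.mem_univ i),
        ← Finset.mul_prod_erase _ _ hmem, ← mul_assoc]
    refine Ideal.mul_mem_right _ _ ?_
    have : M (σ i) i * M (σ j) j =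
        (X ⟨(min i j, max i j), min_le_max⟩ :
          MvPolynomial {ij : Fin n × Fin n // ij.1 ≤ ij.2} k) ^ 2 := by
      rw [hji, ← hj, hsymm j i, hM i j, sq]
    rw [this]
    exact Ideal.subset_span ⟨_, rfl⟩
  have key : Ideal.Quotient.mk I M.det = Ideal.Quotient.mk I (∏ i : Fin n, M i i) := by
    rw [hdet, map_sum]
    have hsplit := Finset.sum_filter_add_sum_filter_not Finset.univ
      (fun σ : Equiv.Perm (Fin n) => σ⁻¹ = σ)
      (fun σ => Ideal.Quotient.mk I (∏ i, M (σ i) i))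
    rw [← hsplit]
    have hzero : (∑ σ ∈ Finset.univ.filter (fun σ : Equiv.Perm (Fin n) => ¬ σ⁻¹ = σ),
        Ideal.Quotient.mk I (∏ i, M (σ i) i)) = 0 := by
      refine Finset.sum_involution (fun σ _ => σ⁻¹) ?_ ?_ ?_ ?_
      · intro σ hσ
        rw [hinv σ, ← map_add, h2, map_zero]
      · intro σ hσ _
        exact (Finset.mem_filter.1 hσ).2
      · intro σ hσ
        simp only [Finset.mem_filter, Finset.mem_univ, true_and, inv_inv] at hσ ⊢
        exact fun h => hσ h.symm
      · intro σ hσ; simp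
    rw [hzero, add_zero]
    have h1mem : (1 : Equiv.Perm (Fin n)) ∈
        Finset.univ.filter (fun σ : Equiv.Perm (Fin n) => σ⁻¹ = σ) := by simp
    rw [Finset.sum_eq_single_of_mem 1 h1mem]
    · simp
    · intro σ hσ hσ1
      rw [Ideal.Quotient.eq_zero_iff_mem]
      exact hterm σ (Finset.mem_filter.1 hσ).2 hσ1
  rw [Ideal.Quotient.eq] at key
  have hdiag : (∏ i : Fin n, M i i) = ∏ i : Fin n,
      (X (⟨(i, i), le_rfl⟩ : {ij : Fin n × Fin n // ij.1 ≤ ij.2}) :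
        MvPolynomial {ij : Fin n × Fin n // ij.1 ≤ ij.2} k) := by
    refine Finset.prod_congr rfl fun i _ => ?_
    rw [hM]
    exact congrArg X (Subtype.ext (by simp))
  rw [Ideal.Quotient.eq]
  rwa [hdiag] at key
end

section
/- Let k be a field of characteristic 2, S the polynomial ring in the entries of a generic symmetric n×n matrix, f its determinant, and m the maximal homogeneous ideal. Then f·x_{11} lies in the Frobenius power m^{[2]} generated by the squares of the variables. -/
open MvPolynomial

set_option maxHeartbeats 1000000
set_option synthInstance.maxHeartbeats 400000

/-- In characteristic 2, for the generic symmetric `n × n` matrix with determinant `f`, the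
product `f * x_{11}` lies in the Frobenius power `m^{[2]}`, the ideal generated by the squares
of all the variables. -/
theorem stmt_1 (k : Type*) [Field k] [CharP k 2] (n : ℕ) (hn : 0 < n)
    (M : Matrix (Fin n) (Fin n)
      (MvPolynomial {ij : Fin n × Fin n // ij.1 ≤ ij.2} k))
    (hM : ∀ i j, M i j = X ⟨(min i j, max i j), min_le_max⟩) :
    M.det * X (⟨(⟨0, hn⟩, ⟨0, hn⟩), le_rfl⟩ : {ij : Fin n × Fin n // ij.1 ≤ ij.2}) ∈
      Ideal.span (Set.range fun v : {ij : Fin n × Fin n // ij.1 ≤ ij.2} =>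
        (X v : MvPolynomial {ij : Fin n × Fin n // ij.1 ≤ ij.2} k) ^ 2) := by
  classical
  set I := Ideal.span (Set.range fun v : {ij : Fin n × Fin n // ij.1 ≤ ij.2} =>
        (X v : MvPolynomial {ij : Fin n × Fin n // ij.1 ≤ ij.2} k) ^ 2) with hI
  set φ := Ideal.Quotient.mk I with hφ
  have hsq : ∀ v : {ij : Fin n × Fin n // ij.1 ≤ ij.2},
      φ ((X v : MvPolynomial {ij : Fin n × Fin n // ij.1 ≤ ij.2} k) ^ 2) = 0 := by
    intro v
    rw [Ideal.Quotient.eq_zero_iff_mem]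
    exact Ideal.subset_span ⟨v, rfl⟩
  rw [← Ideal.Quotient.eq_zero_iff_mem]
  set z : Fin n := ⟨0, hn⟩
  set p00 : {ij : Fin n × Fin n // ij.1 ≤ ij.2} := ⟨(z, z), le_rfl⟩
  have hsym : ∀ i j, M i j = M j i := by
    intro i j
    rw [hM, hM]
    congr 1
    apply Subtype.ext
    simp [Prod.ext_iff, min_comm, max_comm]
  -- expand determinant
  rw [Matrix.det_apply, Finset.sum_mul, map_sum]
  have hterm : ∀ σ : Equiv.Perm (Fin n),
      (Equiv.Perm.sign σ • ∏ i, M (σ i) i) * X p00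
        = (∏ i, M (σ i) i) * X p00 := by
    intro σ
    rcases Int.units_eq_one_or (Equiv.Perm.sign σ) with h | h <;>
      simp [h, Units.smul_def, CharTwo.neg_eq]
  simp only [hterm]
  have hFsymm : ∀ σ : Equiv.Perm (Fin n),
      φ ((∏ i, M (σ⁻¹ i) i) * X p00) = φ ((∏ i, M (σ i) i) * X p00) := by
    intro σ
    have : (∏ i, M (σ⁻¹ i) i) = ∏ i, M (σ i) i := by
      rw [← Equiv.prod_comp σ (fun i => M (σ⁻¹ i) i)]
      simp [hsym]
    rw [this]
  have hzero : ∀ σ : Equiv.Perm (Fin n), σ⁻¹ = σ →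
      φ ((∏ i, M (σ i) i) * X p00) = 0 := by
    intro σ hinv
    by_cases h1 : σ = 1
    · subst h1
      have key : (∏ i, M ((1 : Equiv.Perm (Fin n)) i) i) * X p00
          = X p00 ^ 2 * ∏ i ∈ Finset.univ.erase z, M ((1 : Equiv.Perm (Fin n)) i) i := by
        rw [← Finset.mul_prod_erase Finset.univ (fun i => M ((1 : Equiv.Perm (Fin n)) i) i)
          (Finset.mem_univ z)]
        have hz : M ((1 : Equiv.Perm (Fin n)) z) z = X p00 := by
          simp [hM, p00]
        rw [hz]; ring
      rw [key, map_mul, hsq, zero_mul]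
    · obtain ⟨i, hi⟩ : ∃ i, σ i ≠ i := by
        by_contra hc
        push_neg at hc
        exact h1 (Equiv.ext hc)
      set q : {ij : Fin n × Fin n // ij.1 ≤ ij.2} :=
        ⟨(min i (σ i), max i (σ i)), min_le_max⟩ with hq
      have e1 : M (σ i) i = X q := by
        rw [hM]
        congr 1
        apply Subtype.ext
        simp [hq, Prod.ext_iff, min_comm, max_comm]
      have e2 : M (σ (σ i)) (σ i) = X q := by
        have hσσ : σ (σ i) = i := by
          nth_rewrite 1 [← hinv]
          exact Equiv.symm_apply_apply σ i
        rw [hσσ, hM]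
      have hmem : σ i ∈ Finset.univ.erase i := Finset.mem_erase.mpr ⟨hi, Finset.mem_univ _⟩
      have key : (∏ j, M (σ j) j)
          = X q ^ 2 * ∏ j ∈ (Finset.univ.erase i).erase (σ i), M (σ j) j := by
        rw [← Finset.mul_prod_erase Finset.univ (fun j => M (σ j) j) (Finset.mem_univ i),
          ← Finset.mul_prod_erase _ (fun j => M (σ j) j) hmem, e1, e2]
        ring
      rw [key, mul_assoc, map_mul, hsq, zero_mul]
  refine Finset.sum_ninvolution (fun σ => σ⁻¹) ?_ ?_ (fun _ => Finset.mem_univ _)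
    (fun σ => inv_inv σ)
  · intro σ
    show φ _ + φ ((∏ i, M (σ⁻¹ i) i) * X p00) = 0
    rw [hFsymm, ← map_add, ← two_mul]
    have h2 : (2 : MvPolynomial {ij : Fin n × Fin n // ij.1 ≤ ij.2} k) = 0 := by
      have := CharP.cast_eq_zero (MvPolynomial {ij : Fin n × Fin n // ij.1 ≤ ij.2} k) 2
      simpa using this
    rw [h2, zero_mul, map_zero]
  · intro σ hσ
    by_contra h
    have h' : σ⁻¹ = σ := h
    exact hσ (hzero σ h')
end

section
/- Let k be a field of characteristic 2, S the polynomial ring in the entries of a generic symmetric n×n matrix with determinant f, and q = 2^s with s ≥ 1. Then the element g = f^{q/2 - 1} · x_{11}^{q/2} satisfies f·g ∈ m^{[q]}, where m^{[q]} is the ideal generated by the q-th powers of all the variables. -/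
open MvPolynomial

lemma sq_mem_aux {k : Type*} [Field k] [CharP k 2] {V : Type*} {a : MvPolynomial V k} {m : ℕ}
    (h : a ∈ Ideal.span (Set.range fun v : V => (X v : MvPolynomial V k) ^ m)) :
    a ^ 2 ∈ Ideal.span (Set.range fun v : V => (X v : MvPolynomial V k) ^ (m * 2)) := by
  have h1 := Ideal.mem_map_of_mem (frobenius (MvPolynomial V k) 2) h
  rw [Ideal.map_span] at h1
  rw [frobenius_def] at h1
  refine Ideal.span_mono ?_ h1
  rintro _ ⟨_, ⟨v, rfl⟩, rfl⟩
  refine ⟨v, ?_⟩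
  show (X v : MvPolynomial V k) ^ (m * 2) = frobenius (MvPolynomial V k) 2 ((X v) ^ m)
  rw [frobenius_def, pow_mul]

lemma pow_mem_aux {k : Type*} [Field k] [CharP k 2] {V : Type*} {a : MvPolynomial V k}
    (h : a ∈ Ideal.span (Set.range fun v : V => (X v : MvPolynomial V k) ^ 2)) (t : ℕ) :
    a ^ 2 ^ t ∈ Ideal.span (Set.range fun v : V => (X v : MvPolynomial V k) ^ 2 ^ (t + 1)) := by
  induction t with
  | zero => simpa using h
  | succ t ih =>
    have h2 : a ^ 2 ^ (t + 1) = (a ^ 2 ^ t) ^ 2 := by rw [← pow_mul, pow_succ]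
    rw [h2]
    have h3 := sq_mem_aux ih
    rwa [show 2 ^ (t + 1) * 2 = 2 ^ (t + 1 + 1) from (pow_succ 2 (t + 1)).symm] at h3

/-- In characteristic 2, with `f` the determinant of the generic symmetric `n × n` matrix and
`q = 2 ^ s`, `s ≥ 1`, the element `g = f ^ (q/2 - 1) * x_{11} ^ (q/2)` satisfies
`f * g ∈ m^{[q]} = ⟨x_{ij} ^ q⟩`. Here `q / 2 = 2 ^ (s - 1)`. -/
theorem stmt_2 (k : Type*) [Field k] [CharP k 2] (n : ℕ) (hn : 0 < n) (s : ℕ) (hs : 1 ≤ s)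
    (M : Matrix (Fin n) (Fin n)
      (MvPolynomial {ij : Fin n × Fin n // ij.1 ≤ ij.2} k))
    (hM : ∀ i j, M i j = X ⟨(min i j, max i j), min_le_max⟩) :
    M.det *
      (M.det ^ (2 ^ (s - 1) - 1) *
        X (⟨(⟨0, hn⟩, ⟨0, hn⟩), le_rfl⟩ : {ij : Fin n × Fin n // ij.1 ≤ ij.2}) ^ 2 ^ (s - 1)) ∈
      Ideal.span (Set.range fun v : {ij : Fin n × Fin n // ij.1 ≤ ij.2} =>
        (X v : MvPolynomial {ij : Fin n × Fin n // ij.1 ≤ ij.2} k) ^ 2 ^ s) := by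
  classical
  set z : {ij : Fin n × Fin n // ij.1 ≤ ij.2} := ⟨(⟨0, hn⟩, ⟨0, hn⟩), le_rfl⟩ with hz
  set o : Fin n := ⟨0, hn⟩ with ho
  -- the key step: f * x₀₀ ∈ m^[2]
  have key : M.det * X z ∈ Ideal.span (Set.range fun v : {ij : Fin n × Fin n // ij.1 ≤ ij.2} => (X v : MvPolynomial _ k) ^ 2) := by
    set I := Ideal.span (Set.range fun v : {ij : Fin n × Fin n // ij.1 ≤ ij.2} => (X v : MvPolynomial _ k) ^ 2) with hI
    have hsign : ∀ σ : Equiv.Perm (Fin n), ((Equiv.Perm.sign σ : ℤ) : MvPolynomial {ij : Fin n × Fin n // ij.1 ≤ ij.2} k) = 1 := by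
      intro σ
      rcases Int.units_eq_one_or (Equiv.Perm.sign σ) with h | h <;> rw [h]
      · simp
      · push_cast
        exact CharTwo.neg_eq 1
    have hdet : M.det = ∑ σ : Equiv.Perm (Fin n), ∏ i, M (σ i) i := by
      rw [Matrix.det_apply']
      exact Finset.sum_congr rfl fun σ _ => by rw [hsign σ, one_mul]
    -- symmetry of the term
    have hts : ∀ σ : Equiv.Perm (Fin n), (∏ i, M (σ⁻¹ i) i) = ∏ i, M (σ i) i := by
      intro σ
      rw [← Equiv.prod_comp σ (fun i => M (σ⁻¹ i) i)]
      refine Finset.prod_congr rfl fun i _ => ?_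
      rw [show σ⁻¹ (σ i) = i from σ.symm_apply_apply i, hM, hM]
      exact congrArg X (Subtype.ext (Prod.ext (min_comm _ _) (max_comm _ _)))
    rw [hdet, Finset.sum_mul,
      ← Finset.sum_filter_add_sum_filter_not Finset.univ (fun σ : Equiv.Perm (Fin n) => σ⁻¹ = σ)]
    refine Ideal.add_mem _ ?_ ?_
    · -- involutions
      refine Ideal.sum_mem _ fun σ hσ => ?_
      have hσi : σ⁻¹ = σ := (Finset.mem_filter.1 hσ).2
      by_cases h0 : σ o = o
      · have e1 : (∏ i, M (σ i) i) = M (σ o) o * ∏ i ∈ Finset.univ.erase o, M (σ i) i :=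
          (Finset.mul_prod_erase _ _ (Finset.mem_univ o)).symm
        have hf : M (σ o) o = X z := by
          rw [h0, hM]
          exact congrArg X (Subtype.ext (Prod.ext (min_self o) (max_self o)))
        have e2 : (∏ i, M (σ i) i) * X z
            = X z ^ 2 * ∏ i ∈ Finset.univ.erase o, M (σ i) i := by
          rw [e1, hf]; ring
        rw [e2]
        exact Ideal.mul_mem_right _ _ (Ideal.subset_span ⟨z, rfl⟩)
      · set j : Fin n := σ o with hj
        have hσj : σ j = o := by
          have : σ⁻¹ (σ o) = o := σ.symm_apply_apply o
          rwa [hσi] at this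
        set v : {ij : Fin n × Fin n // ij.1 ≤ ij.2} := ⟨(min (σ o) o, max (σ o) o), min_le_max⟩ with hv
        have hf1 : M (σ o) o = X v := by rw [hM]
        have hf2 : M (σ j) j = X v := by
          rw [hσj, hM]
          exact congrArg X (Subtype.ext (Prod.ext (min_comm _ _) (max_comm _ _)))
        have e1 : (∏ i, M (σ i) i)
            = M (σ o) o * (M (σ j) j *
                ∏ i ∈ (Finset.univ.erase o).erase j, M (σ i) i) := by
          rw [← Finset.mul_prod_erase Finset.univ (fun x => M (σ x) x) (Finset.mem_univ o),
            ← Finset.mul_prod_erase (Finset.univ.erase o) (fun x => M (σ x) x)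
              (Finset.mem_erase.2 ⟨h0, Finset.mem_univ j⟩)]
        have e2 : (∏ i, M (σ i) i) * X z
            = X v ^ 2 * ((∏ i ∈ (Finset.univ.erase o).erase j, M (σ i) i) * X z) := by
          rw [e1, hf1, hf2]; ring
        rw [e2]
        exact Ideal.mul_mem_right _ _ (Ideal.subset_span ⟨v, rfl⟩)
    · -- non-involutions cancel in pairs
      have hzero : (∑ σ ∈ Finset.univ.filter (fun σ : Equiv.Perm (Fin n) => ¬σ⁻¹ = σ),
          (∏ i, M (σ i) i) * X z) = 0 := by
        refine Finset.sum_involution (fun σ _ => σ⁻¹) ?_ ?_ ?_ ?_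
        · intro σ _
          rw [hts σ]
          exact CharTwo.add_self_eq_zero _
        · intro σ hσ _
          exact (Finset.mem_filter.1 hσ).2
        · intro σ hσ
          refine Finset.mem_filter.2 ⟨Finset.mem_univ _, ?_⟩
          rw [inv_inv]
          exact fun h => (Finset.mem_filter.1 hσ).2 h.symm
        · intro σ _
          exact inv_inv σ
      rw [hzero]
      exact Ideal.zero_mem _
  -- now raise to the power 2^(s-1)
  have hm : 1 ≤ 2 ^ (s - 1) := Nat.one_le_two_pow
  have heq : M.det * (M.det ^ (2 ^ (s - 1) - 1) * X z ^ 2 ^ (s - 1))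
      = (M.det * X z) ^ 2 ^ (s - 1) := by
    rw [mul_pow, show M.det * (M.det ^ (2 ^ (s - 1) - 1) * X z ^ 2 ^ (s - 1))
        = (M.det * M.det ^ (2 ^ (s - 1) - 1)) * X z ^ 2 ^ (s - 1) from by ring,
      ← pow_succ', Nat.sub_add_cancel hm]
  rw [heq]
  have := pow_mem_aux key (s - 1)
  rwa [Nat.sub_add_cancel hs] at this
end

section
/- Let k be a field of characteristic 2, S the polynomial ring in the entries of a generic symmetric n×n matrix with determinant f, and q = 2^s with s ≥ 1. Then the element g = f^{q/2 - 1} · x_{11}^{q/2} does not belong to the Frobenius power m^{[q]} = ⟨x_{ij}^q⟩: its expansion in the monomial basis contains the monomial x_{11}^{q-1} · x_{22}^{q/2-1} ⋯ x_{nn}^{q/2-1}, which is not divisible by any q-th power of a variable. -/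
open MvPolynomial

section Aux
variable {k : Type*} [CommRing k] {σ : Type*} [DecidableEq σ]

/-- Setting to zero the variables not satisfying `P` does not change the coefficient of a
monomial supported on variables satisfying `P`. -/
lemma coeff_aeval_ite (P : σ → Prop) [DecidablePred P]
    (d : σ →₀ ℕ) (hd : ∀ v, ¬ P v → d v = 0) (p : MvPolynomial σ k) :
    coeff d (aeval (fun v => if P v then (X v : MvPolynomial σ k) else 0) p) = coeff d p := by
  induction p using MvPolynomial.induction_on' with
  | add p q hp hq => rw [map_add, coeff_add, coeff_add, hp, hq]
  | monomial m c =>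
    rw [aeval_monomial]
    by_cases h : ∀ v ∈ m.support, P v
    · have : (m.prod fun i e => (if P i then (X i : MvPolynomial σ k) else 0) ^ e)
          = m.prod fun i e => (X i : MvPolynomial σ k) ^ e := by
        apply Finset.prod_congr rfl
        intro v hv
        simp only [if_pos (h v hv)]
      rw [this, algebraMap_eq, ← monomial_eq]
    · push_neg at h
      obtain ⟨v, hv, hPv⟩ := h
      have : (m.prod fun i e => (if P i then (X i : MvPolynomial σ k) else 0) ^ e) = 0 := by
        apply Finset.prod_eq_zero hv
        simp only [if_neg hPv]
        rw [zero_pow]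
        simpa using hv
      rw [this, mul_zero, coeff_zero, coeff_monomial, if_neg]
      intro hmd
      exact hPv (absurd (hd v hPv) (by simpa [← hmd] using (Finsupp.mem_support_iff.mp hv)))

omit [DecidableEq σ] in
lemma prod_X_monomial {α : Type*} (t : Finset α) (f : α → σ) :
    (∏ i ∈ t, (X (f i) : MvPolynomial σ k)) =
      monomial (∑ i ∈ t, Finsupp.single (f i) 1) 1 := by
  classical
  induction t using Finset.induction with
  | empty => simp [monomial_zero']
  | insert _ _ h ih =>
    rw [Finset.prod_insert h, Finset.sum_insert h, ih, X, monomial_mul, one_mul]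

end Aux

/-- In characteristic 2, with `f` the determinant of the generic symmetric `n × n` matrix and
`q = 2 ^ s`, `s ≥ 1`, the element `g = f ^ (q/2 - 1) * x_{11} ^ (q/2)` does not lie in the
Frobenius power `m^{[q]} = ⟨x_{ij} ^ q⟩`: its expansion contains the monomial
`x_{11} ^ (q-1) * x_{22} ^ (q/2-1) * ⋯ * x_{nn} ^ (q/2-1)` with nonzero coefficient, whose
exponents are all `< q`. -/
theorem stmt_3 (k : Type*) [Field k] [CharP k 2] (n : ℕ) (hn : 0 < n) (s : ℕ) (hs : 1 ≤ s)
    (M : Matrix (Fin n) (Fin n)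
      (MvPolynomial {ij : Fin n × Fin n // ij.1 ≤ ij.2} k))
    (hM : ∀ i j, M i j = X ⟨(min i j, max i j), min_le_max⟩) :
    MvPolynomial.coeff
        (∑ i : Fin n, Finsupp.single (⟨(i, i), le_rfl⟩ : {ij : Fin n × Fin n // ij.1 ≤ ij.2})
          (if (i : ℕ) = 0 then 2 ^ s - 1 else 2 ^ (s - 1) - 1))
        (M.det ^ (2 ^ (s - 1) - 1) *
          X (⟨(⟨0, hn⟩, ⟨0, hn⟩), le_rfl⟩ : {ij : Fin n × Fin n // ij.1 ≤ ij.2}) ^ 2 ^ (s - 1))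
      ≠ 0 ∧
    M.det ^ (2 ^ (s - 1) - 1) *
        X (⟨(⟨0, hn⟩, ⟨0, hn⟩), le_rfl⟩ : {ij : Fin n × Fin n // ij.1 ≤ ij.2}) ^ 2 ^ (s - 1) ∉
      Ideal.span (Set.range fun v : {ij : Fin n × Fin n // ij.1 ≤ ij.2} =>
        (X v : MvPolynomial {ij : Fin n × Fin n // ij.1 ≤ ij.2} k) ^ 2 ^ s) := by
  classical
  have ht : 1 ≤ 2 ^ (s - 1) := Nat.one_le_two_pow
  have hq : (2 : ℕ) ^ s = 2 * 2 ^ (s - 1) := by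
    conv_lhs => rw [show s = (s - 1) + 1 by omega]
    rw [pow_succ]
    ring
  set dg : {ij : Fin n × Fin n // ij.1 ≤ ij.2} →₀ ℕ :=
    ∑ i : Fin n, Finsupp.single (⟨(i, i), le_rfl⟩ : {ij : Fin n × Fin n // ij.1 ≤ ij.2})
      (if (i : ℕ) = 0 then 2 ^ s - 1 else 2 ^ (s - 1) - 1) with hdg
  set g := M.det ^ (2 ^ (s - 1) - 1) *
      (X (⟨(⟨0, hn⟩, ⟨0, hn⟩), le_rfl⟩ : {ij : Fin n × Fin n // ij.1 ≤ ij.2})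
        : MvPolynomial {ij : Fin n × Fin n // ij.1 ≤ ij.2} k) ^ 2 ^ (s - 1) with hg
  have heinj : Function.Injective
      (fun i : Fin n => (⟨(i, i), le_rfl⟩ : {ij : Fin n × Fin n // ij.1 ≤ ij.2})) := by
    intro a b hab
    simpa using congrArg (fun v : {ij : Fin n × Fin n // ij.1 ≤ ij.2} => v.1.1) hab
  -- the monomial is supported on the diagonal
  have hdsupp : ∀ v : {ij : Fin n × Fin n // ij.1 ≤ ij.2}, ¬ (v.1.1 = v.1.2) → dg v = 0 := by
    intro v hv
    rw [hdg, Finsupp.finset_sum_apply]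
    apply Finset.sum_eq_zero
    intro i _
    rw [Finsupp.single_apply, if_neg]
    intro h
    exact hv (by rw [← h])
  -- the "kill off-diagonal variables" map sends M to the diagonal matrix
  have hφM : M.map (aeval fun v : {ij : Fin n × Fin n // ij.1 ≤ ij.2} =>
        if v.1.1 = v.1.2 then (X v : MvPolynomial {ij : Fin n × Fin n // ij.1 ≤ ij.2} k) else 0)
      = Matrix.diagonal fun i : Fin n =>
          (X (⟨(i, i), le_rfl⟩ : {ij : Fin n × Fin n // ij.1 ≤ ij.2})
            : MvPolynomial {ij : Fin n × Fin n // ij.1 ≤ ij.2} k) := by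
    apply Matrix.ext
    intro i j
    rw [Matrix.map_apply, hM, aeval_X]
    by_cases h : i = j
    · subst h
      rw [if_pos (by simp), Matrix.diagonal_apply_eq]
      congr 1
      exact Subtype.ext (by simp)
    · rw [Matrix.diagonal_apply_ne _ h, if_neg]
      rcases le_total i j with hij | hij
      · simp only [min_eq_left hij, max_eq_right hij]
        exact fun hc => h hc
      · simp only [min_eq_right hij, max_eq_left hij]
        exact fun hc => h hc.symm
  have hφdet : aeval (fun v : {ij : Fin n × Fin n // ij.1 ≤ ij.2} =>
        if v.1.1 = v.1.2 then (X v : MvPolynomial {ij : Fin n × Fin n // ij.1 ≤ ij.2} k) else 0)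
        M.det
      = monomial (∑ i : Fin n,
          Finsupp.single (⟨(i, i), le_rfl⟩ : {ij : Fin n × Fin n // ij.1 ≤ ij.2}) 1) 1 := by
    rw [show (aeval fun v : {ij : Fin n × Fin n // ij.1 ≤ ij.2} =>
          if v.1.1 = v.1.2 then (X v : MvPolynomial {ij : Fin n × Fin n // ij.1 ≤ ij.2} k) else 0)
          M.det
        = (M.map (aeval fun v : {ij : Fin n × Fin n // ij.1 ≤ ij.2} =>
            if v.1.1 = v.1.2 then (X v : MvPolynomial {ij : Fin n × Fin n // ij.1 ≤ ij.2} k)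
            else 0)).det from RingHom.map_det _ M,
      hφM, Matrix.det_diagonal, prod_X_monomial]
  -- the key finsupp identity
  have hkey : (2 ^ (s - 1) - 1) • (∑ i : Fin n,
        Finsupp.single (⟨(i, i), le_rfl⟩ : {ij : Fin n × Fin n // ij.1 ≤ ij.2}) 1)
      + Finsupp.single (⟨(⟨0, hn⟩, ⟨0, hn⟩), le_rfl⟩ : {ij : Fin n × Fin n // ij.1 ≤ ij.2})
          (2 ^ (s - 1)) = dg := by
    have hsingle : (Finsupp.single
          (⟨(⟨0, hn⟩, ⟨0, hn⟩), le_rfl⟩ : {ij : Fin n × Fin n // ij.1 ≤ ij.2})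
          (2 ^ (s - 1)) : {ij : Fin n × Fin n // ij.1 ≤ ij.2} →₀ ℕ)
        = ∑ i : Fin n, if i = (⟨0, hn⟩ : Fin n) then
            Finsupp.single (⟨(i, i), le_rfl⟩ : {ij : Fin n × Fin n // ij.1 ≤ ij.2}) (2 ^ (s - 1))
          else 0 := by
      rw [Finset.sum_ite_eq' Finset.univ (⟨0, hn⟩ : Fin n)]
      simp
    rw [Finset.smul_sum, hsingle, ← Finset.sum_add_distrib, hdg]
    apply Finset.sum_congr rfl
    intro i _
    rw [Finsupp.smul_single, smul_eq_mul, mul_one]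
    by_cases h : (i : ℕ) = 0
    · have hi : i = (⟨0, hn⟩ : Fin n) := Fin.ext h
      rw [if_pos hi, if_pos h, ← Finsupp.single_add]
      rw [hi]
      congr 1
      omega
    · have hi : i ≠ (⟨0, hn⟩ : Fin n) := fun hc => h (by rw [hc])
      rw [if_neg hi, if_neg h, add_zero]
  -- the coefficient is 1
  have h1 : coeff dg g = 1 := by
    rw [← coeff_aeval_ite
        (fun v : {ij : Fin n × Fin n // ij.1 ≤ ij.2} => v.1.1 = v.1.2) dg hdsupp, hg, map_mul,
      map_pow, map_pow, hφdet, aeval_X, if_pos rfl, monomial_pow, one_pow, X_pow_eq_monomial,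
      monomial_mul, one_mul, hkey, coeff_monomial, if_pos rfl]
  refine ⟨by rw [h1]; exact one_ne_zero, ?_⟩
  -- non-membership
  intro hmem
  rw [Ideal.mem_span_range_iff_exists_fun] at hmem
  obtain ⟨c, hc⟩ := hmem
  have hdlt : ∀ v : {ij : Fin n × Fin n // ij.1 ≤ ij.2}, dg v < 2 ^ s := by
    intro v
    rw [hdg, Finsupp.finset_sum_apply]
    by_cases hv : ∃ j : Fin n, (⟨(j, j), le_rfl⟩ : {ij : Fin n × Fin n // ij.1 ≤ ij.2}) = v
    · obtain ⟨j, hj⟩ := hv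
      rw [Finset.sum_eq_single j]
      · rw [Finsupp.single_apply, if_pos hj]
        split_ifs <;> omega
      · intro b _ hb
        rw [Finsupp.single_apply, if_neg]
        intro hbv
        exact hb (heinj (hbv.trans hj.symm))
      · intro h
        exact absurd (Finset.mem_univ j) h
    · push_neg at hv
      rw [Finset.sum_eq_zero]
      · exact pow_pos (by norm_num) s
      · intro i _
        rw [Finsupp.single_apply, if_neg (hv i)]
  have h0 : coeff dg g = 0 := by
    rw [← hc, coeff_sum]
    apply Finset.sum_eq_zero
    intro v _
    rw [X_pow_eq_monomial, coeff_mul_monomial', if_neg]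
    intro hle
    have := hle v
    rw [Finsupp.single_eq_same] at this
    exact absurd (hdlt v) (by omega)
  rw [h1] at h0
  exact one_ne_zero h0
end

section
/- Let k be a field of characteristic 2, S the polynomial ring in the entries of a generic symmetric n×n matrix (so dim S = n(n+1)/2), f its determinant, R = S/⟨f⟩, m the maximal homogeneous ideal, and q = 2^s with s ≥ 1. Then v_R(q) := max{d : m^d ⊄ (m^{[q]} + ⟨f⟩)} satisfies v_R(q) ≥ q·(n²−1)/2 − n(n−1)/2. -/
open MvPolynomial


open Finset in
theorem detMulDiag {A : Type*} [CommRing A] (h2 : ∀ x : A, x + x = 0) {n : ℕ}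
    (M : Matrix (Fin n) (Fin n) A) (hsym : ∀ i j, M i j = M j i)
    (hsq : ∀ i j, M i j * M i j = 0) (i0 : Fin n) :
    M.det * M i0 i0 = 0 := by
  rw [Matrix.det_apply, Finset.sum_mul]
  refine Finset.sum_involution (fun σ _ => σ⁻¹) ?_ ?_ (fun _ _ => Finset.mem_univ _)
    (fun _ _ => inv_inv _)
  · intro σ _
    have hprod : ∏ i, M (σ⁻¹ i) i = ∏ i, M (σ i) i := by
      calc ∏ i, M (σ⁻¹ i) i = ∏ i, M i (σ⁻¹ i) := by simp_rw [hsym]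
        _ = ∏ i, M (σ i) (σ⁻¹ (σ i)) := (Equiv.prod_comp σ _).symm
        _ = ∏ i, M (σ i) i := by simp
    rw [Equiv.Perm.sign_inv, hprod]
    exact h2 _
  · intro σ _ hne
    by_contra h
    have hinv : σ⁻¹ = σ := by simpa using h
    apply hne
    suffices hz : (∏ i, M (σ i) i) * M i0 i0 = 0 by
      rw [smul_mul_assoc, hz, smul_zero]
    by_cases hfix : σ i0 = i0
    · rw [← Finset.mul_prod_erase univ _ (Finset.mem_univ i0), hfix]
      rw [mul_comm (M i0 i0), mul_assoc, hsq, mul_zero]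
    · have h1 : σ (σ i0) = i0 := by
        nth_rewrite 1 [← hinv]
        exact Equiv.symm_apply_apply σ _
      rw [← Finset.mul_prod_erase univ _ (Finset.mem_univ i0)]
      rw [← Finset.mul_prod_erase (univ.erase i0) (fun i => M (σ i) i)
        (Finset.mem_erase.mpr ⟨hfix, Finset.mem_univ _⟩)]
      rw [h1, ← mul_assoc, hsym i0 (σ i0), hsq, zero_mul, zero_mul]


theorem arith_aux (n t h : ℕ) (hn : 1 ≤ n) (ht : 1 ≤ t) (hh : 2 * h = n * (n - 1)) :
    (n - 1) * t + (2 * t - 1) * h = t * (n ^ 2 - 1) - h := by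
  obtain ⟨m, rfl⟩ : ∃ m, n = m + 1 := ⟨n - 1, by omega⟩
  have e1 : (m + 1) ^ 2 = m * m + 2 * m + 1 := by ring
  have e2 : (m + 1) * ((m + 1) - 1) = m * m + m := by rw [Nat.add_sub_cancel]; ring
  rw [e2] at hh
  have h1 : h ≤ (m + 1) ^ 2 - 1 := by omega
  have h2 : h ≤ t * ((m + 1) ^ 2 - 1) := h1.trans (Nat.le_mul_of_pos_left _ ht)
  have h2t : 1 ≤ 2 * t := by omega
  have h3 : 1 ≤ (m + 1) ^ 2 := by omega
  zify [h2, h2t, h3]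
  have hh' : (2 : ℤ) * h = m * m + m := by exact_mod_cast hh
  have e1' : ((m : ℤ) + 1) ^ 2 - 1 = m * m + 2 * m := by ring
  push_cast
  rw [e1']
  linear_combination t * hh'

theorem sum_aux (n : ℕ) (hn : 0 < n) (t : ℕ) (ht : 1 ≤ t) :
    ∑ v : {ij : Fin n × Fin n // ij.1 ≤ ij.2},
      (if v.1.1 = v.1.2 then (if v.1.1 = (⟨0, hn⟩ : Fin n) then 0 else t) else 2 * t - 1)
    = t * (n ^ 2 - 1) - n * (n - 1) / 2 := by
  classical
  set i0 : Fin n := ⟨0, hn⟩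
  set c := 2 * t - 1 with hc
  set F : Fin n × Fin n → ℕ := fun p => if p.1 = p.2 then (if p.1 = i0 then 0 else t) else c
    with hF
  have h1 : ∑ v : {ij : Fin n × Fin n // ij.1 ≤ ij.2}, F v.1
      = ∑ p ∈ Finset.univ.filter (fun p : Fin n × Fin n => p.1 ≤ p.2), F p :=
    (Finset.sum_subtype _ (fun x => by simp) F).symm
  have h2 : ∑ p ∈ Finset.univ.filter (fun p : Fin n × Fin n => p.1 ≤ p.2), F p
      = ∑ i : Fin n, ∑ j : Fin n, (if i ≤ j then F (i, j) else 0) := by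
    rw [Finset.sum_filter, Fintype.sum_prod_type]
  have h3 : ∀ i j : Fin n, (if i ≤ j then F (i, j) else 0)
      = (if j = i then (if i = i0 then 0 else t) else 0) + (if i < j then c else 0) := by
    intro i j
    rcases lt_trichotomy i j with h | h | h
    · simp [hF, h, h.le, h.ne, h.ne']
    · simp [hF, h]
    · simp [hF, h.ne, not_lt.mpr h.le, not_le.mpr h, h.ne']
  have h4 : ∀ i : Fin n, ∑ j : Fin n, (if i < j then c else 0) = c * (n - 1 - i.val) := by
    intro i
    rw [Finset.sum_ite, Finset.sum_const, Finset.sum_const, smul_zero, add_zero]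
    have : Finset.univ.filter (fun j => i < j) = Finset.Ioi i := by ext j; simp
    rw [this, Fin.card_Ioi, smul_eq_mul, mul_comm]
  have h5 : ∑ i : Fin n, (if i = i0 then 0 else t) = t * (n - 1) := by
    rw [Finset.sum_ite, Finset.sum_const, Finset.sum_const, smul_zero, zero_add,
      Finset.filter_ne', Finset.card_erase_of_mem (Finset.mem_univ _), Finset.card_univ,
      Fintype.card_fin, smul_eq_mul, mul_comm]
  have h6 : ∑ i : Fin n, (n - 1 - (i : ℕ)) = n * (n - 1) / 2 := by
    rw [Fin.sum_univ_eq_sum_range (fun r => n - 1 - r)]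
    rw [Finset.sum_range_reflect (fun r => r) n]
    exact Finset.sum_range_id n
  calc ∑ v : {ij : Fin n × Fin n // ij.1 ≤ ij.2}, F v.1
      = ∑ i : Fin n, ∑ j : Fin n, (if i ≤ j then F (i, j) else 0) := h1.trans h2
    _ = ∑ i : Fin n, ((if i = i0 then 0 else t) + c * (n - 1 - i.val)) := by
        refine Finset.sum_congr rfl fun i _ => ?_
        rw [Finset.sum_congr rfl fun j _ => h3 i j, Finset.sum_add_distrib,
          Finset.sum_ite_eq' Finset.univ i _, if_pos (Finset.mem_univ i), h4 i]
    _ = t * (n - 1) + c * (n * (n - 1) / 2) := by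
        rw [Finset.sum_add_distrib, h5, ← Finset.mul_sum, h6]
    _ = t * (n ^ 2 - 1) - n * (n - 1) / 2 := by
        have hdvd : 2 ∣ n * (n - 1) := by
          rcases Nat.even_or_odd n with h | h
          · exact Dvd.dvd.mul_right h.two_dvd _
          · exact Dvd.dvd.mul_left (Nat.Odd.sub_odd h odd_one).two_dvd _
        have hh : 2 * (n * (n - 1) / 2) = n * (n - 1) := Nat.mul_div_cancel' hdvd
        rw [mul_comm t (n - 1), hc]
        exact arith_aux n t _ hn ht hh


open MvPolynomial

lemma coeff_span_pow_eq_zero {σ K : Type*} [Fintype σ] [CommSemiring K] (q : ℕ)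
    (c : σ →₀ ℕ) (hc : ∀ v, c v < q) {p : MvPolynomial σ K}
    (hp : p ∈ Ideal.span (Set.range fun v : σ => (X v : MvPolynomial σ K) ^ q)) :
    coeff c p = 0 := by
  rw [Ideal.span, Submodule.mem_span_range_iff_exists_fun] at hp
  obtain ⟨r, rfl⟩ := hp
  rw [coeff_sum]
  refine Finset.sum_eq_zero fun v _ => ?_
  rw [smul_eq_mul, X_pow_eq_monomial, coeff_mul_monomial']
  rw [if_neg]
  rw [Finsupp.single_le_iff]
  exact not_le.mpr (hc v)

lemma coeff_span_X_eq_zero {σ K : Type*} [Fintype σ] [CommSemiring K] (P : σ → Prop)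
    [DecidablePred P] (c : σ →₀ ℕ) (hc : ∀ v, P v → c v = 0) {p : MvPolynomial σ K}
    (hp : p ∈ Ideal.span (Set.range fun o : {v : σ // P v} => (X o.1 : MvPolynomial σ K))) :
    coeff c p = 0 := by
  classical
  rw [Ideal.span, Submodule.mem_span_range_iff_exists_fun] at hp
  obtain ⟨r, rfl⟩ := hp
  rw [coeff_sum]
  refine Finset.sum_eq_zero fun o _ => ?_
  rw [smul_eq_mul, coeff_mul_X', if_neg]
  simp [Finsupp.mem_support_iff, hc o.1 o.2]

lemma frob_mem {σ K : Type*} [Fintype σ] [CommSemiring K] [CharP K 2] (s : ℕ) (hs : 1 ≤ s)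
    {p : MvPolynomial σ K}
    (hp : p ∈ Ideal.span (Set.range fun v : σ => (X v : MvPolynomial σ K) ^ 2)) :
    p ^ 2 ^ (s - 1) ∈ Ideal.span (Set.range fun v : σ => (X v : MvPolynomial σ K) ^ 2 ^ s) := by
  haveI : Fact (Nat.Prime 2) := ⟨Nat.prime_two⟩
  rw [Ideal.span, Submodule.mem_span_range_iff_exists_fun] at hp
  obtain ⟨r, rfl⟩ := hp
  rw [sum_pow_char_pow]
  refine Ideal.sum_mem _ fun v _ => ?_
  rw [smul_eq_mul, mul_pow, ← pow_mul]
  have h2 : 2 * 2 ^ (s - 1) = 2 ^ s := by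
    rw [← pow_succ']
    congr 1
    omega
  rw [h2]
  exact Ideal.mul_mem_left _ _ (Ideal.subset_span (Set.mem_range_self v))

lemma prod_monomial {σ K α : Type*} [CommSemiring K] (s : Finset α) (d : α → σ →₀ ℕ) :
    (∏ x ∈ s, monomial (d x) (1 : K)) = monomial (∑ x ∈ s, d x) 1 := by
  classical
  induction s using Finset.cons_induction with
  | empty => simp [monomial_zero']
  | cons a s ha ih => rw [Finset.prod_cons, Finset.sum_cons, ih, monomial_mul, one_mul]

lemma monomial_mem_pow_span {σ K : Type*} [Fintype σ] [CommSemiring K] (a : σ →₀ ℕ) :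
    (monomial a (1 : K)) ∈
      (Ideal.span (Set.range (X : σ → MvPolynomial σ K))) ^ (∑ v, a v) := by
  classical
  have h1 : (monomial a (1 : K)) = ∏ v : σ, X v ^ a v := by
    rw [← prod_X_pow_eq_monomial (s := a)]
    refine (Finset.prod_subset (Finset.subset_univ a.support) fun x _ hx => ?_)
    rw [Finsupp.notMem_support_iff.mp hx, pow_zero]
  rw [h1, ← Finset.prod_pow_eq_pow_sum]
  exact Ideal.prod_mem_prod fun v _ =>
    Ideal.pow_mem_pow (Ideal.subset_span (Set.mem_range_self v)) _

/-- In characteristic 2, for the symmetric determinantal hypersurface `R = S/⟨f⟩` (with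
`S = k[x_{ij} : i ≤ j]` of dimension `n(n+1)/2` and `f` the symmetric determinant), for
`q = 2 ^ s`, `s ≥ 1`, one has `v_R(q) ≥ q(n²-1)/2 - n(n-1)/2`; that is,
`m ^ (2^(s-1)·(n²-1) - n(n-1)/2)` is not contained in `m^{[q]} + ⟨f⟩`. -/
theorem stmt_7 (k : Type*) [Field k] [CharP k 2] (n : ℕ) (hn : 0 < n) (s : ℕ) (hs : 1 ≤ s)
    (M : Matrix (Fin n) (Fin n)
      (MvPolynomial {ij : Fin n × Fin n // ij.1 ≤ ij.2} k))
    (hM : ∀ i j, M i j = X ⟨(min i j, max i j), min_le_max⟩) :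
    ¬ (Ideal.span (Set.range
          (X : {ij : Fin n × Fin n // ij.1 ≤ ij.2} →
            MvPolynomial {ij : Fin n × Fin n // ij.1 ≤ ij.2} k))) ^
        (2 ^ (s - 1) * (n ^ 2 - 1) - n * (n - 1) / 2) ≤
      Ideal.span (Set.range fun v : {ij : Fin n × Fin n // ij.1 ≤ ij.2} =>
        (X v : MvPolynomial {ij : Fin n × Fin n // ij.1 ≤ ij.2} k) ^ 2 ^ s) ⊔
      Ideal.span {M.det} := by
  classical
  intro H
  set i0 : Fin n := ⟨0, hn⟩ with hi0
  set dvar : Fin n → {ij : Fin n × Fin n // ij.1 ≤ ij.2} := fun i => ⟨(i, i), le_refl i⟩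
    with hdvar
  set v00 : {ij : Fin n × Fin n // ij.1 ≤ ij.2} := dvar i0 with hv00
  set t := 2 ^ (s - 1) with htdef
  have ht : 1 ≤ t := Nat.one_le_two_pow
  have hts : 2 * t = 2 ^ s := by
    rw [htdef, ← pow_succ']
    congr 1
    omega
  set A : {ij : Fin n × Fin n // ij.1 ≤ ij.2} → ℕ :=
    fun v => if v.1.1 = v.1.2 then (if v.1.1 = i0 then 0 else t) else 2 * t - 1 with hA
  set B : {ij : Fin n × Fin n // ij.1 ≤ ij.2} → ℕ :=
    fun v => if v.1.1 = v.1.2 then (if v.1.1 = i0 then 2 * t - 1 else t - 1) else 0 with hB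
  set a := Finsupp.equivFunOnFinite.symm A with haDef
  set ν := Finsupp.equivFunOnFinite.symm B with hνDef
  have hav : ∀ v : {ij : Fin n × Fin n // ij.1 ≤ ij.2},
      a v = if v.1.1 = v.1.2 then (if v.1.1 = i0 then 0 else t) else 2 * t - 1 :=
    fun v => rfl
  have hνv : ∀ v : {ij : Fin n × Fin n // ij.1 ≤ ij.2},
      ν v = if v.1.1 = v.1.2 then (if v.1.1 = i0 then 2 * t - 1 else t - 1) else 0 :=
    fun v => rfl
  -- ===== step 1: the monomial μ lies in m ^ d =====
  have hsum : ∑ v : {ij : Fin n × Fin n // ij.1 ≤ ij.2}, a v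
      = 2 ^ (s - 1) * (n ^ 2 - 1) - n * (n - 1) / 2 := by
    have h := sum_aux n hn t ht
    simp only [hav]
    exact h
  have hμ : (monomial a (1 : k)) ∈
      (Ideal.span (Set.range (X : {ij : Fin n × Fin n // ij.1 ≤ ij.2} →
          MvPolynomial {ij : Fin n × Fin n // ij.1 ≤ ij.2} k))) ^
        (2 ^ (s - 1) * (n ^ 2 - 1) - n * (n - 1) / 2) := by
    have h := monomial_mem_pow_span (K := k) a
    rwa [hsum] at h
  obtain ⟨α, hα, β, hβ, hαβ⟩ := Submodule.mem_sup.mp (H hμ)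
  obtain ⟨r, hr⟩ := Ideal.mem_span_singleton'.mp hβ
  -- ===== step 2: M.det * X v00 ∈ span of squares =====
  set I2 := Ideal.span (Set.range fun v : {ij : Fin n × Fin n // ij.1 ≤ ij.2} =>
    (X v : MvPolynomial {ij : Fin n × Fin n // ij.1 ≤ ij.2} k) ^ 2) with hI2
  set π := Ideal.Quotient.mk I2 with hπ
  have h2S : (2 : MvPolynomial {ij : Fin n × Fin n // ij.1 ≤ ij.2} k) = 0 := by
    have := CharP.cast_eq_zero (MvPolynomial {ij : Fin n × Fin n // ij.1 ≤ ij.2} k) 2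
    exact_mod_cast this
  have h2Q : ∀ x : MvPolynomial {ij : Fin n × Fin n // ij.1 ≤ ij.2} k ⧸ I2, x + x = 0 := by
    intro x
    rw [← two_mul, show (2 : MvPolynomial {ij : Fin n × Fin n // ij.1 ≤ ij.2} k ⧸ I2) = 0
      from ?_, zero_mul]
    rw [← map_ofNat π 2, h2S, map_zero]
  have hπsq : ∀ w, π (X w) * π (X w) = 0 := by
    intro w
    rw [← map_mul, ← sq, Ideal.Quotient.eq_zero_iff_mem]
    exact Ideal.subset_span ⟨w, rfl⟩
  have hsymM : ∀ i j, (M.map π) i j = (M.map π) j i := by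
    intro i j
    simp only [Matrix.map_apply]
    rw [hM i j, hM j i]
    exact congrArg π (congrArg X (Subtype.ext (by
      simp only [Prod.mk.injEq]
      exact ⟨min_comm i j, max_comm i j⟩)))
  have hsqM : ∀ i j, (M.map π) i j * (M.map π) i j = 0 := by
    intro i j
    simp only [Matrix.map_apply, hM i j]
    exact hπsq _
  have hdd := detMulDiag h2Q (M.map π) hsymM hsqM i0
  have hfx : M.det * X v00 ∈ I2 := by
    rw [← Ideal.Quotient.eq_zero_iff_mem]
    have e1 : π (M.det * X v00) = (M.map π).det * (M.map π) i0 i0 := by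
      rw [map_mul, π.map_det M]
      congr 1
      simp only [Matrix.map_apply, hM i0 i0]
      exact congrArg π (congrArg X (Subtype.ext (by
        simp only [Prod.mk.injEq, hv00, hdvar]
        exact ⟨min_self i0, max_self i0⟩)))
    rw [e1]
    exact hdd
  -- ===== step 3: μ * g ∈ m^{[q]} =====
  set g := M.det ^ (t - 1) * X v00 ^ t with hg
  have hfg : M.det * g ∈ Ideal.span (Set.range fun v : {ij : Fin n × Fin n // ij.1 ≤ ij.2} =>
      (X v : MvPolynomial {ij : Fin n × Fin n // ij.1 ≤ ij.2} k) ^ 2 ^ s) := by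
    have h1 := frob_mem s hs hfx
    have h2 : M.det * g = (M.det * X v00) ^ t := by
      rw [mul_pow, hg]
      have : M.det ^ t = M.det * M.det ^ (t - 1) := by
        conv_lhs => rw [show t = 1 + (t - 1) by omega]
        rw [pow_add, pow_one]
      rw [this]
      ring
    rw [h2]
    exact h1
  have hμg : monomial a (1 : k) * g ∈
      Ideal.span (Set.range fun v : {ij : Fin n × Fin n // ij.1 ≤ ij.2} =>
      (X v : MvPolynomial {ij : Fin n × Fin n // ij.1 ≤ ij.2} k) ^ 2 ^ s) := by
    rw [← hαβ, add_mul]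
    refine Ideal.add_mem _ (Ideal.mul_mem_right _ _ hα) ?_
    rw [← hr, mul_assoc]
    exact Ideal.mul_mem_left _ r hfg
  -- ===== step 4: hence coeff (a + ν) (μ * g) = 0, i.e. coeff ν g = 0 =====
  have hlt : ∀ v, (a + ν) v < 2 ^ s := by
    intro v
    rw [Finsupp.add_apply, hav, hνv, ← hts]
    clear_value t
    split_ifs <;> omega
  have hcz : coeff ν g = 0 := by
    have h := coeff_span_pow_eq_zero (2 ^ s) (a + ν) hlt hμg
    rwa [coeff_monomial_mul, one_mul] at h
  -- ===== step 5: coeff ν g = 1 =====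
  set D := ∏ i : Fin n, (X (dvar i) :
    MvPolynomial {ij : Fin n × Fin n // ij.1 ≤ ij.2} k) with hD
  set Pid := Ideal.span (Set.range
    fun o : {v : {ij : Fin n × Fin n // ij.1 ≤ ij.2} // v.1.1 ≠ v.1.2} =>
      (X o.1 : MvPolynomial {ij : Fin n × Fin n // ij.1 ≤ ij.2} k)) with hPid
  have hMdiag : ∀ i : Fin n, M i i = X (dvar i) := by
    intro i
    rw [hM i i]
    exact congrArg X (Subtype.ext (Prod.ext (min_self i) (max_self i)))
  have hfD : M.det - D ∈ Pid := by
    rw [Matrix.det_apply]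
    have hsplit := Finset.sum_erase_add Finset.univ
      (fun σ : Equiv.Perm (Fin n) => Equiv.Perm.sign σ • ∏ i, M (σ i) i) (Finset.mem_univ 1)
    have h1 : (Equiv.Perm.sign (1 : Equiv.Perm (Fin n))) •
        ∏ i, M ((1 : Equiv.Perm (Fin n)) i) i = D := by
      simp only [Equiv.Perm.sign_one, one_smul, Equiv.Perm.one_apply, hMdiag, hD]
    rw [← hsplit]
    beta_reduce
    rw [h1, add_sub_cancel_right]
    refine Ideal.sum_mem _ fun σ hσ => ?_
    have hσ1 : σ ≠ 1 := (Finset.mem_erase.mp hσ).1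
    have hex : ∃ i, σ i ≠ i := by
      by_contra h
      push_neg at h
      exact hσ1 (Equiv.ext fun i => h i)
    obtain ⟨i1, hi1⟩ := hex
    have hprod : (∏ i, M (σ i) i) = M (σ i1) i1 * ∏ i ∈ Finset.univ.erase i1, M (σ i) i :=
      (Finset.mul_prod_erase _ _ (Finset.mem_univ i1)).symm
    have hXmem : M (σ i1) i1 ∈ Pid := by
      rw [hM (σ i1) i1]
      refine Ideal.subset_span ⟨⟨⟨(min (σ i1) i1, max (σ i1) i1), min_le_max⟩, ?_⟩, rfl⟩
      intro hEq
      simp only at hEq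
      rcases le_total (σ i1) i1 with h | h
      · rw [min_eq_left h, max_eq_right h] at hEq
        exact hi1 hEq
      · rw [min_eq_right h, max_eq_left h] at hEq
        exact hi1 hEq.symm
    rw [hprod, Units.smul_def, zsmul_eq_mul]
    exact Ideal.mul_mem_left _ _ (Ideal.mul_mem_right _ _ hXmem)
  have hpow : M.det ^ (t - 1) - D ^ (t - 1) ∈ Pid := by
    have h1 : Ideal.Quotient.mk Pid (M.det) = Ideal.Quotient.mk Pid D := by
      rw [Ideal.Quotient.mk_eq_mk_iff_sub_mem]
      exact hfD
    rw [← Ideal.Quotient.mk_eq_mk_iff_sub_mem, map_pow, map_pow, h1]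
  have hsingle : ∀ v : {ij : Fin n × Fin n // ij.1 ≤ ij.2},
      (∑ i : Fin n, Finsupp.single (dvar i) (1 : ℕ)) v = if v.1.1 = v.1.2 then 1 else 0 := by
    intro v
    rw [Finsupp.finset_sum_apply]
    by_cases hd : v.1.1 = v.1.2
    · rw [if_pos hd]
      have hv : dvar v.1.1 = v := Subtype.ext (Prod.ext rfl hd)
      rw [Finset.sum_eq_single v.1.1]
      · rw [hv, Finsupp.single_eq_same]
      · intro i _ hne
        refine Finsupp.single_eq_of_ne' fun h => hne ?_
        have h1 := congrArg (fun u : {ij : Fin n × Fin n // ij.1 ≤ ij.2} => u.1.1) h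
        simpa [hdvar] using h1
      · intro h
        exact absurd (Finset.mem_univ _) h
    · rw [if_neg hd]
      refine Finset.sum_eq_zero fun i _ => Finsupp.single_eq_of_ne' fun h => ?_
      have h1 := congrArg (fun u : {ij : Fin n × Fin n // ij.1 ≤ ij.2} => u.1.1) h
      have h2 := congrArg (fun u : {ij : Fin n × Fin n // ij.1 ≤ ij.2} => u.1.2) h
      simp only [hdvar] at h1 h2
      exact hd (h1.symm.trans h2)
  have hexp : ((t - 1) • ∑ i : Fin n, Finsupp.single (dvar i) (1 : ℕ))
      + Finsupp.single v00 t = ν := by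
    ext v
    have hiff : v00 = v ↔ (v.1.1 = v.1.2 ∧ v.1.1 = i0) := by
      constructor
      · intro h
        constructor
        · rw [← h]
        · rw [← h]
      · rintro ⟨hd, h0⟩
        exact Subtype.ext (Prod.ext h0.symm (h0.symm.trans hd))
    rw [Finsupp.add_apply, Finsupp.smul_apply, hsingle v, smul_eq_mul, Finsupp.single_apply,
      hνv]
    by_cases hd : v.1.1 = v.1.2
    · by_cases h0 : v.1.1 = i0
      · rw [if_pos hd, if_pos hd, if_pos h0, if_pos (hiff.mpr ⟨hd, h0⟩)]
        clear_value t
        omega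
      · rw [if_pos hd, if_pos hd, if_neg h0, if_neg (fun h => h0 (hiff.mp h).2)]
        clear_value t
        omega
    · rw [if_neg hd, if_neg hd, if_neg (fun h => hd (hiff.mp h).1)]
      simp
  have hDmon : D ^ (t - 1) * X v00 ^ t = monomial ν 1 := by
    have hDm : D = monomial (∑ i : Fin n, Finsupp.single (dvar i) 1) 1 := by
      rw [hD, ← prod_monomial Finset.univ (fun i : Fin n => Finsupp.single (dvar i) 1)]
      refine Finset.prod_congr rfl fun i _ => ?_
      rw [← pow_one (X (dvar i) : MvPolynomial {ij : Fin n × Fin n // ij.1 ≤ ij.2} k),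
        X_pow_eq_monomial]
    rw [hDm, monomial_pow, one_pow, X_pow_eq_monomial, monomial_mul, one_mul, hexp]
  have hν0 : ∀ v : {ij : Fin n × Fin n // ij.1 ≤ ij.2}, v.1.1 ≠ v.1.2 → ν v = 0 := by
    intro v h
    rw [hνv]
    exact if_neg h
  have hone : coeff ν g = 1 := by
    have hsplitg : g = monomial ν 1 + (M.det ^ (t - 1) - D ^ (t - 1)) * X v00 ^ t := by
      rw [← hDmon, hg]
      ring
    have hz := coeff_span_X_eq_zero
      (fun v : {ij : Fin n × Fin n // ij.1 ≤ ij.2} => v.1.1 ≠ v.1.2) ν hν0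
      (Ideal.mul_mem_right (X v00 ^ t) _ hpow)
    rw [hsplitg, coeff_add, hz, add_zero, coeff_monomial, if_pos rfl]
  rw [hone] at hcz
  exact one_ne_zero hcz
end

section
/- Let S be a polynomial ring over a field of characteristic p > 0, f a homogeneous polynomial of degree e, q = p^s, and for t in the field let f_t be a family of homogeneous degree-e polynomials depending polynomially on t with f_t obtained from f by an invertible scaling of variables for t ≠ 0. If multiplication by f_1 as a map (S/m^{[q]})_{d−e} → (S/m^{[q]})_d is surjective, then multiplication by f_t is surjective for all t ≠ 0; consequently v_q(S/⟨f_t⟩) is independent of t for t ≠ 0 and satisfies v_q(S/⟨f_1⟩) ≤ v_q(S/⟨f_0⟩). -/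
open MvPolynomial

/-- `v_q(S/J)`: the socle degree of `(S/J)/m^{[q]}`, i.e. `max {d : m^d ⊄ J}` for the ideal
`J ⊇ m^{[q]}` of `S = k[x_1,…,x_r]`. -/
noncomputable def vsoc (k : Type*) [Field k] (r : ℕ) (J : Ideal (MvPolynomial (Fin r) k)) : ℕ :=
  sSup {d | ¬ (Ideal.span (Set.range (X : Fin r → MvPolynomial (Fin r) k))) ^ d ≤ J}

section Stmt16Aux

open Finsupp Pointwise

variable {k : Type*} [Field k] {r : ℕ}

variable {k : Type*} [Field k] {r : ℕ}

def epsw (ε : Fin r → Bool) : Fin r → ℕ := fun i => if ε i then 1 else 0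

def wtp (ε : Fin r → Bool) : Fin r → ℕ × ℕ := fun i => (1, epsw ε i)

noncomputable def psiH (ε : Fin r → Bool) (t : k) :
    MvPolynomial (Fin r) k →ₐ[k] MvPolynomial (Fin r) k :=
  aeval (fun i => if ε i then t • X i else X i)

lemma psiH_X (ε : Fin r → Bool) (t : k) (i : Fin r) :
    psiH ε t (X i) = if ε i then t • X i else X i := by
  simp [psiH]

lemma psiH_monomial (ε : Fin r → Bool) (t : k) (σ : Fin r →₀ ℕ) (c : k) :
    psiH ε t (monomial σ c) = C (t ^ (weight (epsw ε) σ)) * monomial σ c := by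
  rw [psiH, aeval_monomial, monomial_eq]
  have key : (σ.prod fun i n => (if ε i then t • (X i : MvPolynomial (Fin r) k) else X i) ^ n)
      = C (t ^ (weight (epsw ε) σ)) * σ.prod fun i n => (X i : MvPolynomial (Fin r) k) ^ n := by
    rw [Finsupp.prod, Finsupp.prod, weight_apply, Finsupp.sum]
    rw [Finset.prod_congr rfl (g := fun a => C (t ^ (σ a • epsw ε a)) * (X a : MvPolynomial (Fin r) k) ^ σ a)
      (fun a _ => by
        by_cases h : ε a
        · simp [h, epsw, smul_pow, smul_eq_C_mul, mul_pow]
        · simp [h, epsw])]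
    rw [Finset.prod_mul_distrib, ← map_prod, Finset.prod_pow_eq_pow_sum]
  rw [key]
  rw [algebraMap_eq]
  ring

lemma coeff_psiH (ε : Fin r → Bool) (t : k) (φ : MvPolynomial (Fin r) k) (τ : Fin r →₀ ℕ) :
    coeff τ (psiH ε t φ) = t ^ (weight (epsw ε) τ) * coeff τ φ := by
  conv_lhs => rw [φ.as_sum]
  rw [map_sum]
  simp only [psiH_monomial, C_mul_monomial]
  rw [coeff_sum]
  simp only [coeff_monomial]
  by_cases h : τ ∈ φ.support
  · rw [Finset.sum_eq_single τ]
    · simp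
    · intro b _ hb; simp [hb]
    · intro h'; exact absurd h h'
  · rw [Finset.sum_eq_zero, MvPolynomial.notMem_support_iff.mp h, mul_zero]
    intro b hb
    have : b ≠ τ := fun e => h (e ▸ hb)
    simp [this]

lemma psiH_psiH (ε : Fin r → Bool) (t u : k) (φ : MvPolynomial (Fin r) k) :
    psiH ε t (psiH ε u φ) = psiH ε (t * u) φ := by
  have : (psiH ε t).comp (psiH ε u) = psiH (k := k) ε (t * u) := by
    apply MvPolynomial.algHom_ext
    intro i
    simp only [AlgHom.comp_apply, psiH_X]
    by_cases h : ε i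
    · simp [h, psiH_X, smul_smul, mul_comm]
    · simp [h, psiH_X]
  exact DFunLike.congr_fun this φ

lemma psiH_one (ε : Fin r → Bool) (φ : MvPolynomial (Fin r) k) : psiH ε 1 φ = φ := by
  have : psiH (k := k) ε 1 = AlgHom.id k (MvPolynomial (Fin r) k) := by
    apply MvPolynomial.algHom_ext
    intro i
    simp [psiH_X]
  rw [this]; rfl

lemma psiH_isWeightedHomogeneous {M : Type*} [AddCommMonoid M] (w : Fin r → M)
    (ε : Fin r → Bool) (t : k) {φ : MvPolynomial (Fin r) k} {m : M}
    (hφ : φ.IsWeightedHomogeneous w m) : (psiH ε t φ).IsWeightedHomogeneous w m := by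
  intro τ hτ
  apply hφ
  rw [coeff_psiH] at hτ
  exact fun h => hτ (by rw [h, mul_zero])

lemma psiH_zero (ε : Fin r → Bool) (φ : MvPolynomial (Fin r) k) :
    psiH ε 0 φ = weightedHomogeneousComponent (epsw ε) 0 φ := by
  classical
  ext τ
  rw [coeff_psiH, coeff_weightedHomogeneousComponent]
  by_cases h : weight (epsw ε) τ = 0
  · rw [if_pos h, h, pow_zero, one_mul]
  · rw [if_neg h, zero_pow h, zero_mul]

section IdealMaps

variable (ε : Fin r → Bool)

lemma psiH_span_le (t : k) {s : Set (MvPolynomial (Fin r) k)}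
    (hs : ∀ g ∈ s, psiH ε t g ∈ Ideal.span s) :
    Ideal.map (psiH ε t) (Ideal.span s) ≤ Ideal.span s := by
  rw [Ideal.map_span]
  refine Ideal.span_le.mpr ?_
  rintro _ ⟨g, hg, rfl⟩
  exact hs g hg

lemma psiH_mem_span (t : k) {s : Set (MvPolynomial (Fin r) k)}
    (hs : ∀ g ∈ s, psiH ε t g ∈ Ideal.span s) {x : MvPolynomial (Fin r) k}
    (hx : x ∈ Ideal.span s) : psiH ε t x ∈ Ideal.span s :=
  psiH_span_le ε t hs (Ideal.mem_map_of_mem _ hx)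

lemma stableX (t : k) (g : MvPolynomial (Fin r) k)
    (hg : g ∈ Set.range (X : Fin r → MvPolynomial (Fin r) k)) :
    psiH ε t g ∈ Ideal.span (Set.range (X : Fin r → MvPolynomial (Fin r) k)) := by
  obtain ⟨i, rfl⟩ := hg
  rw [psiH_X]
  by_cases h : ε i
  · rw [if_pos h]
    exact Submodule.smul_of_tower_mem _ _ (Ideal.subset_span (Set.mem_range_self i))
  · rw [if_neg h]
    exact Ideal.subset_span (Set.mem_range_self i)

lemma stableXq (t : k) (q : ℕ) (g : MvPolynomial (Fin r) k)
    (hg : g ∈ Set.range fun i : Fin r => (X i : MvPolynomial (Fin r) k) ^ q) :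
    psiH ε t g ∈ Ideal.span (Set.range fun i : Fin r => (X i : MvPolynomial (Fin r) k) ^ q) := by
  obtain ⟨i, rfl⟩ := hg
  rw [map_pow, psiH_X]
  by_cases h : ε i
  · rw [if_pos h, smul_pow]
    exact Submodule.smul_of_tower_mem _ _ (Ideal.subset_span (Set.mem_range_self i))
  · rw [if_neg h]
    exact Ideal.subset_span (Set.mem_range_self i)

lemma map_psiH_span {t : k} (ht : t ≠ 0) {s : Set (MvPolynomial (Fin r) k)}
    (hs : ∀ c : k, ∀ g ∈ s, psiH ε c g ∈ Ideal.span s) :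
    Ideal.map (psiH ε t) (Ideal.span s) = Ideal.span s := by
  refine le_antisymm (psiH_span_le ε t (hs t)) ?_
  intro x hx
  have : x = psiH ε t (psiH ε t⁻¹ x) := by
    rw [psiH_psiH, mul_inv_cancel₀ ht, psiH_one]
  rw [this]
  exact Ideal.mem_map_of_mem _ (psiH_mem_span ε t⁻¹ (hs t⁻¹) hx)

lemma pow_le_move {t : k} (ht : t ≠ 0) (q d : ℕ) (g : MvPolynomial (Fin r) k)
    (h : (Ideal.span (Set.range (X : Fin r → MvPolynomial (Fin r) k))) ^ d ≤
      Ideal.span (Set.range fun i : Fin r => (X i : MvPolynomial (Fin r) k) ^ q) ⊔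
        Ideal.span {g}) :
    (Ideal.span (Set.range (X : Fin r → MvPolynomial (Fin r) k))) ^ d ≤
      Ideal.span (Set.range fun i : Fin r => (X i : MvPolynomial (Fin r) k) ^ q) ⊔
        Ideal.span {psiH ε t g} := by
  have hmap := Ideal.map_mono (f := psiH ε t) h
  rw [Ideal.map_pow, map_psiH_span ε ht (fun c => stableX ε c), Ideal.map_sup,
    map_psiH_span ε ht (fun c => stableXq ε c q), Ideal.map_span, Set.image_singleton] at hmap
  exact hmap

end IdealMaps

section Key

variable {M : Type*} [AddCancelCommMonoid M] {w : Fin r → M}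

lemma key1 {u : MvPolynomial (Fin r) k} {m₀ : M} (hu : u.IsWeightedHomogeneous w m₀)
    (m' : M) (g : MvPolynomial (Fin r) k) :
    weightedHomogeneousComponent w (m₀ + m') (u * g) =
      u * weightedHomogeneousComponent w m' g := by
  classical
  ext τ
  rw [coeff_weightedHomogeneousComponent, coeff_mul, coeff_mul]
  by_cases hτ : weight w τ = m₀ + m'
  · rw [if_pos hτ]
    refine Finset.sum_congr rfl ?_
    rintro ⟨a, b⟩ hab
    rw [Finset.HasAntidiagonal.mem_antidiagonal] at hab
    by_cases ha : coeff a u = 0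
    · simp [ha]
    · have hwa : weight w a = m₀ := hu ha
      have hwb : weight w b = m' := by
        have h2 : weight w a + weight w b = m₀ + m' := by
          rw [← map_add, hab, hτ]
        rw [hwa] at h2
        exact add_left_cancel h2
      rw [coeff_weightedHomogeneousComponent, if_pos hwb]
  · rw [if_neg hτ]
    refine (Finset.sum_eq_zero ?_).symm
    rintro ⟨a, b⟩ hab
    rw [Finset.HasAntidiagonal.mem_antidiagonal] at hab
    by_cases ha : coeff a u = 0
    · simp [ha]
    · rw [coeff_weightedHomogeneousComponent, if_neg, mul_zero]
      intro hwb
      exact hτ (by rw [← hab, map_add, hu ha, hwb])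

lemma key2 {u : MvPolynomial (Fin r) k} {m₀ : M} (hu : u.IsWeightedHomogeneous w m₀)
    {m : M} (hm : ∀ m', m ≠ m₀ + m') (g : MvPolynomial (Fin r) k) :
    weightedHomogeneousComponent w m (u * g) = 0 := by
  classical
  ext τ
  rw [coeff_weightedHomogeneousComponent, coeff_zero, coeff_mul]
  by_cases hτ : weight w τ = m
  · rw [if_pos hτ]
    refine Finset.sum_eq_zero ?_
    rintro ⟨a, b⟩ hab
    rw [Finset.HasAntidiagonal.mem_antidiagonal] at hab
    by_cases ha : coeff a u = 0
    · simp [ha]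
    · exact absurd (by rw [← hτ, ← hab, map_add, hu ha]) (hm (weight w b))
  · rw [if_neg hτ]

lemma component_mem_span {G : Set (MvPolynomial (Fin r) k)}
    (hG : ∀ g ∈ G, ∃ m₀ : M, g.IsWeightedHomogeneous w m₀)
    {x : MvPolynomial (Fin r) k} (hx : x ∈ Ideal.span G) (m : M) :
    weightedHomogeneousComponent w m x ∈ Ideal.span G := by
  classical
  obtain ⟨c, hc, rfl⟩ := Submodule.mem_span_set.mp hx
  rw [Finsupp.sum, map_sum]
  refine Ideal.sum_mem _ ?_
  intro g hg
  obtain ⟨m₀, hgw⟩ := hG g (hc hg)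
  rw [smul_eq_mul, mul_comm]
  by_cases hex : ∃ m', m = m₀ + m'
  · obtain ⟨m', rfl⟩ := hex
    rw [key1 hgw m' (c g)]
    exact Ideal.mul_mem_right _ _ (Ideal.subset_span (hc hg))
  · rw [key2 hgw (fun m' h => hex ⟨m', h⟩) (c g)]
    exact Submodule.zero_mem _

end Key

section Weights

variable (ε : Fin r → Bool)

lemma weight_wtp (σ : Fin r →₀ ℕ) :
    weight (wtp ε) σ = (weight (1 : Fin r → ℕ) σ, weight (epsw ε) σ) := by
  rw [weight_apply, weight_apply, weight_apply, Finsupp.sum, Finsupp.sum, Finsupp.sum,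
    Prod.ext_iff]
  constructor
  · rw [Prod.fst_sum]
    exact Finset.sum_congr rfl (fun i _ => rfl)
  · rw [Prod.snd_sum]
    exact Finset.sum_congr rfl (fun i _ => rfl)

end Weights

lemma prod_X_pow_mem (σ : Fin r →₀ ℕ) (F : Finset (Fin r)) :
    (∏ i ∈ F, (X i : MvPolynomial (Fin r) k) ^ σ i) ∈
      (Ideal.span (Set.range (X : Fin r → MvPolynomial (Fin r) k))) ^ (∑ i ∈ F, σ i) := by
  classical
  induction F using Finset.induction with
  | empty => simp
  | insert _ _ hnew ih =>
    rename_i a F'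
    rw [Finset.prod_insert hnew, Finset.sum_insert hnew, pow_add]
    exact Ideal.mul_mem_mul (Ideal.pow_mem_pow (Ideal.subset_span (Set.mem_range_self a)) _) ih

lemma monomial_mem_pow (σ : Fin r →₀ ℕ) (c : k) :
    monomial σ c ∈
      (Ideal.span (Set.range (X : Fin r → MvPolynomial (Fin r) k))) ^ (weight (1 : Fin r → ℕ) σ) := by
  rw [monomial_eq]
  have hw : weight (1 : Fin r → ℕ) σ = ∑ i ∈ σ.support, σ i := by
    rw [weight_apply, Finsupp.sum]
    exact Finset.sum_congr rfl (fun i _ => by simp)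
  rw [hw]
  exact Ideal.mul_mem_left _ _ (prod_X_pow_mem σ σ.support)

lemma whomog_mem_pow {ε : Fin r → Bool} {h : MvPolynomial (Fin r) k} {d' n : ℕ}
    (hh : h.IsWeightedHomogeneous (wtp ε) (d', n)) :
    h ∈ (Ideal.span (Set.range (X : Fin r → MvPolynomial (Fin r) k))) ^ d' := by
  nth_rewrite 1 [h.as_sum]
  refine Ideal.sum_mem _ ?_
  intro σ hσ
  have hw := hh (MvPolynomial.mem_support_iff.mp hσ)
  rw [weight_wtp] at hw
  have : weight (1 : Fin r → ℕ) σ = d' := congrArg Prod.fst hw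
  rw [← this]
  exact monomial_mem_pow σ _

lemma whomog_eq_zero {ε : Fin r → Bool} {h : MvPolynomial (Fin r) k} {d' n : ℕ}
    (hh : h.IsWeightedHomogeneous (wtp ε) (d', n)) (hdn : d' < n) : h = 0 := by
  rw [MvPolynomial.eq_zero_iff]
  intro σ
  by_contra hσ
  have hw := hh hσ
  rw [weight_wtp] at hw
  have h1 : weight (1 : Fin r → ℕ) σ = d' := congrArg Prod.fst hw
  have h2 : weight (epsw ε) σ = n := congrArg Prod.snd hw
  have hle : weight (epsw ε) σ ≤ weight (1 : Fin r → ℕ) σ := by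
    rw [weight_apply, weight_apply, Finsupp.sum, Finsupp.sum]
    refine Finset.sum_le_sum ?_
    intro i _
    simp only [smul_eq_mul, Pi.one_apply, mul_one, epsw]
    by_cases hi : ε i <;> simp [hi]
  omega

lemma weight_eps_le (ε : Fin r → Bool) (σ : Fin r →₀ ℕ) :
    weight (epsw ε) σ ≤ weight (1 : Fin r → ℕ) σ := by
  rw [weight_apply, weight_apply, Finsupp.sum, Finsupp.sum]
  refine Finset.sum_le_sum ?_
  intro i _
  simp only [smul_eq_mul, Pi.one_apply, mul_one, epsw]
  by_cases hi : ε i <;> simp [hi]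

lemma homog_decomp (ε : Fin r → Bool) {f : MvPolynomial (Fin r) k} {e : ℕ}
    (hf : f.IsHomogeneous e) :
    f = ∑ j ∈ Finset.range (e + 1), weightedHomogeneousComponent (wtp ε) (e, j) f := by
  classical
  ext τ
  rw [coeff_sum]
  simp only [coeff_weightedHomogeneousComponent]
  by_cases hc : coeff τ f = 0
  · rw [hc, Finset.sum_eq_zero]
    intro j _
    split_ifs <;> simp [hc]
  · have h1 : weight (1 : Fin r → ℕ) τ = e := hf hc
    have : ∀ j ∈ Finset.range (e + 1),
        (if weight (wtp ε) τ = (e, j) then coeff τ f else 0) =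
          (if weight (epsw ε) τ = j then coeff τ f else 0) := by
      intro j _
      simp only [weight_wtp, h1, Prod.mk.injEq, true_and]
    rw [Finset.sum_congr rfl this]
    simp only [Finset.sum_ite_eq, Finset.mem_range]
    rw [if_pos]
    rw [Nat.lt_succ_iff, ← h1]
    exact weight_eps_le ε τ

lemma f0_eq_component (ε : Fin r → Bool) {f : MvPolynomial (Fin r) k} {e : ℕ}
    (hf : f.IsHomogeneous e) :
    weightedHomogeneousComponent (epsw ε) 0 f =
      weightedHomogeneousComponent (wtp ε) (e, 0) f := by
  classical
  ext τ
  rw [coeff_weightedHomogeneousComponent, coeff_weightedHomogeneousComponent]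
  by_cases hc : coeff τ f = 0
  · split_ifs <;> simp [hc]
  · have h1 : weight (1 : Fin r → ℕ) τ = e := hf hc
    simp only [weight_wtp, h1, Prod.mk.injEq, true_and]

lemma Xq_whomog_exists (ε : Fin r → Bool) (q : ℕ) :
    ∀ g ∈ Set.range fun i : Fin r => (X i : MvPolynomial (Fin r) k) ^ q,
      ∃ m₀ : ℕ × ℕ, g.IsWeightedHomogeneous (wtp ε) m₀ := by
  rintro _ ⟨i, rfl⟩
  refine ⟨weight (wtp ε) (Finsupp.single i q), ?_⟩
  show ((X i : MvPolynomial (Fin r) k) ^ q).IsWeightedHomogeneous _ _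
  rw [X_pow_eq_monomial]
  exact isWeightedHomogeneous_monomial _ _ _ rfl

lemma claimC (ε : Fin r → Bool) (q : ℕ) {f : MvPolynomial (Fin r) k} {e : ℕ}
    (hf : f.IsHomogeneous e) (d : ℕ)
    (H0 : (Ideal.span (Set.range (X : Fin r → MvPolynomial (Fin r) k))) ^ d ≤
      Ideal.span (Set.range fun i : Fin r => (X i : MvPolynomial (Fin r) k) ^ q) ⊔
        Ideal.span {weightedHomogeneousComponent (wtp ε) (e, 0) f}) :
    ∀ c d' n : ℕ, ∀ h : MvPolynomial (Fin r) k, d ≤ d' → d' < n + c →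
      h.IsWeightedHomogeneous (wtp ε) (d', n) →
      h ∈ Ideal.span (Set.range fun i : Fin r => (X i : MvPolynomial (Fin r) k) ^ q) ⊔
        Ideal.span {f} := by
  classical
  set Iq := Ideal.span (Set.range fun i : Fin r => (X i : MvPolynomial (Fin r) k) ^ q) with hIq
  set f₀ := weightedHomogeneousComponent (wtp ε) (e, 0) f with hf₀def
  intro c
  induction c with
  | zero =>
    intro d' n h _ hlt hh
    rw [whomog_eq_zero hh (by omega)]
    exact Submodule.zero_mem _
  | succ c ih =>
    intro d' n h hdd' hlt hh
    by_cases hn : d' < n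
    · rw [whomog_eq_zero hh hn]
      exact Submodule.zero_mem _
    push_neg at hn
    have hf₀w : f₀.IsWeightedHomogeneous (wtp ε) (e, 0) :=
      weightedHomogeneousComponent_isWeightedHomogeneous _ _
    have hmem : h ∈ Iq ⊔ Ideal.span {f₀} :=
      H0 (Ideal.pow_le_pow_right hdd' (whomog_mem_pow hh))
    obtain ⟨y, hy, z, hz, hsum⟩ := Submodule.mem_sup.mp hmem
    obtain ⟨a, rfl⟩ := Ideal.mem_span_singleton'.mp hz
    have hπ : h = weightedHomogeneousComponent (wtp ε) (d', n) y +
        weightedHomogeneousComponent (wtp ε) (d', n) (f₀ * a) := by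
      conv_lhs => rw [← hh.weightedHomogeneousComponent_same, ← hsum]
      rw [map_add, mul_comm a f₀]
    have hπy : weightedHomogeneousComponent (wtp ε) (d', n) y ∈ Iq :=
      component_mem_span (Xq_whomog_exists ε q) hy _
    by_cases hed : e ≤ d'
    · have hdec : ((d' : ℕ), n) = ((e, 0) + (d' - e, n) : ℕ × ℕ) := by
        rw [Prod.mk_add_mk]
        exact Prod.ext (by omega) (by omega)
      set c' := weightedHomogeneousComponent (wtp ε) (d' - e, n) a with hc'
      have hπf : weightedHomogeneousComponent (wtp ε) (d', n) (f₀ * a) = f₀ * c' := by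
        rw [hdec, key1 hf₀w]
      -- decompose f
      have hfd := homog_decomp ε hf
      have h0mem : (0 : ℕ) ∈ Finset.range (e + 1) := by simp
      have hfd2 : f = (∑ j ∈ Finset.range (e + 1) \ {0},
          weightedHomogeneousComponent (wtp ε) (e, j) f) + f₀ := by
        rw [hf₀def, ← Finset.sum_eq_sum_sdiff_singleton_add h0mem]
        exact hfd
      have hf₀c' : f₀ * c' = f * c' - ∑ j ∈ Finset.range (e + 1) \ {0},
          weightedHomogeneousComponent (wtp ε) (e, j) f * c' := by
        nth_rewrite 1 [hfd2]
        rw [add_mul, Finset.sum_mul]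
        ring
      rw [hπ, hπf, hf₀c']
      refine Submodule.add_mem _ (Ideal.mem_sup_left hπy) (Submodule.sub_mem _ ?_ ?_)
      · exact Ideal.mem_sup_right (Ideal.mem_span_singleton.mpr (dvd_mul_right f c'))
      · refine Submodule.sum_mem _ ?_
        intro j hj
        rw [Finset.mem_sdiff, Finset.mem_range, Finset.mem_singleton] at hj
        have hterm : (weightedHomogeneousComponent (wtp ε) (e, j) f * c').IsWeightedHomogeneous
            (wtp ε) (d', n + j) := by
          have := (weightedHomogeneousComponent_isWeightedHomogeneous (w := wtp ε) (e, j) f).mul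
            (weightedHomogeneousComponent_isWeightedHomogeneous (w := wtp ε) (d' - e, n) a)
          have heq : ((e, j) + (d' - e, n) : ℕ × ℕ) = (d', n + j) := by
            rw [Prod.mk_add_mk]
            exact Prod.ext (by omega) (by omega)
          rwa [heq] at this
        exact ih d' (n + j) _ hdd' (by omega) hterm
    · have hπf : weightedHomogeneousComponent (wtp ε) (d', n) (f₀ * a) = 0 := by
        refine key2 hf₀w ?_ a
        intro m' heq
        have := congrArg Prod.fst heq
        simp only [Prod.fst_add] at this
        omega
      rw [hπ, hπf, add_zero]
      exact Ideal.mem_sup_left hπy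

lemma mem_setpow_whomog (ε : Fin r → Bool) {d : ℕ} {γ : MvPolynomial (Fin r) k}
    (hγ : γ ∈ (Set.range (X : Fin r → MvPolynomial (Fin r) k)) ^ d) :
    ∃ n : ℕ, γ.IsWeightedHomogeneous (wtp ε) (d, n) := by
  induction d generalizing γ with
  | zero =>
    rw [pow_zero, Set.mem_one] at hγ
    subst hγ
    exact ⟨0, isWeightedHomogeneous_one k (wtp ε)⟩
  | succ d ih =>
    rw [pow_succ] at hγ
    obtain ⟨a, ha, b, hb, rfl⟩ := Set.mem_mul.mp hγ
    obtain ⟨n, hn⟩ := ih ha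
    obtain ⟨i, rfl⟩ := hb
    refine ⟨n + epsw ε i, ?_⟩
    have := hn.mul (isWeightedHomogeneous_X k (wtp ε) i)
    have heq : ((d : ℕ), n) + wtp ε i = (d + 1, n + epsw ε i) := by
      rw [wtp, Prod.mk_add_mk]
    rwa [heq] at this

lemma lemA (ε : Fin r → Bool) (q : ℕ) {f : MvPolynomial (Fin r) k} {e : ℕ}
    (hf : f.IsHomogeneous e) (d : ℕ)
    (H0 : (Ideal.span (Set.range (X : Fin r → MvPolynomial (Fin r) k))) ^ d ≤
      Ideal.span (Set.range fun i : Fin r => (X i : MvPolynomial (Fin r) k) ^ q) ⊔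
        Ideal.span {psiH ε 0 f}) :
    (Ideal.span (Set.range (X : Fin r → MvPolynomial (Fin r) k))) ^ d ≤
      Ideal.span (Set.range fun i : Fin r => (X i : MvPolynomial (Fin r) k) ^ q) ⊔
        Ideal.span {f} := by
  rw [psiH_zero, f0_eq_component ε hf] at H0
  have hC := claimC ε q hf d H0
  rw [Ideal.span, Submodule.span_pow, Submodule.span_le]
  intro γ hγ
  obtain ⟨n, hn⟩ := mem_setpow_whomog ε hγ
  exact hC (d + 1) d n γ le_rfl (by omega) hn

lemma pow_le_Iq (q d : ℕ) (hd : r * q < d) :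
    (Ideal.span (Set.range (X : Fin r → MvPolynomial (Fin r) k))) ^ d ≤
      Ideal.span (Set.range fun i : Fin r => (X i : MvPolynomial (Fin r) k) ^ q) := by
  classical
  rw [Ideal.span, Submodule.span_pow, Submodule.span_le]
  intro γ hγ
  rw [Set.mem_pow] at hγ
  obtain ⟨φ, hφ⟩ := hγ
  choose v hv using fun i => (φ i).2
  have hγeq : γ = ∏ i : Fin d, X (v i) := by
    rw [← hφ, List.prod_ofFn]
    exact (Finset.prod_congr rfl fun i _ => (hv i)).symm
  have hd1 : 0 < d := by omega
  have : Nonempty (Fin r) := ⟨v ⟨0, hd1⟩⟩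
  have hcard : ∑ y : Fin r, (Finset.univ.filter fun x => v x = y).card = d := by
    rw [← Finset.card_eq_sum_card_fiberwise (fun x _ => Finset.mem_univ (v x))]
    simp
  have hfib : ∃ y : Fin r, q ≤ (Finset.univ.filter fun x => v x = y).card := by
    by_contra hcon
    push_neg at hcon
    have : ∑ y : Fin r, (Finset.univ.filter fun x => v x = y).card <
        ∑ _y : Fin r, q :=
      Finset.sum_lt_sum_of_nonempty Finset.univ_nonempty fun y _ => hcon y
    rw [hcard, Finset.sum_const, Finset.card_univ, Fintype.card_fin, smul_eq_mul] at this
    omega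
  obtain ⟨y, hy⟩ := hfib
  have hsplit : γ = (X y : MvPolynomial (Fin r) k) ^
        ((Finset.univ.filter fun x => v x = y).card) *
      ∏ x ∈ Finset.univ.filter fun x => ¬ v x = y, X (v x) := by
    rw [hγeq, ← Finset.prod_filter_mul_prod_filter_not Finset.univ (fun x => v x = y)]
    congr 1
    rw [Finset.prod_congr rfl (g := fun x => (X y : MvPolynomial (Fin r) k))
      (fun x hx => by rw [(Finset.mem_filter.mp hx).2]), Finset.prod_const]
  rw [hsplit, ← Nat.add_sub_cancel' hy, pow_add, mul_assoc]
  exact Ideal.mul_mem_right _ _ (Ideal.subset_span ⟨y, rfl⟩)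

end Stmt16Aux

/-- Semicontinuity under degeneration: let `f` be homogeneous of degree `e` and
`f_t = f(x(t))` the family obtained by scaling a chosen set of variables by `t` (an invertible
scaling for `t ≠ 0`, depending polynomially on `t`). If multiplication by `f_1` is surjective
`(S/m^{[q]})_{d-e} → (S/m^{[q]})_d`, then so is multiplication by `f_t` for every `t ≠ 0`;
consequently `v_q(S/⟨f_t⟩)` is independent of `t ≠ 0` and `v_q(S/⟨f_1⟩) ≤ v_q(S/⟨f_0⟩)`. -/
theorem stmt_16 (k : Type*) [Field k] (p : ℕ) (hp : p.Prime) [CharP k p] (r s e : ℕ)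
    (f : MvPolynomial (Fin r) k) (hf : f.IsHomogeneous e) (he : 0 < e)
    (ε : Fin r → Bool)
    (F : k → MvPolynomial (Fin r) k)
    (hF : ∀ t : k, F t = aeval (fun i : Fin r =>
      if ε i then t • (X i : MvPolynomial (Fin r) k) else X i) f)
    (I : Ideal (MvPolynomial (Fin r) k))
    (hI : I = Ideal.span (Set.range fun i : Fin r => (X i : MvPolynomial (Fin r) k) ^ p ^ s)) :
    (∀ d : ℕ, e ≤ d →
      (∀ h : MvPolynomial (Fin r) k, h.IsHomogeneous d →
        ∃ g : MvPolynomial (Fin r) k, g.IsHomogeneous (d - e) ∧ h - F 1 * g ∈ I) →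
      ∀ t : k, t ≠ 0 → ∀ h : MvPolynomial (Fin r) k, h.IsHomogeneous d →
        ∃ g : MvPolynomial (Fin r) k, g.IsHomogeneous (d - e) ∧ h - F t * g ∈ I) ∧
    (∀ t : k, t ≠ 0 →
      vsoc k r (I ⊔ Ideal.span {F t}) = vsoc k r (I ⊔ Ideal.span {F 1})) ∧
    vsoc k r (I ⊔ Ideal.span {F 1}) ≤ vsoc k r (I ⊔ Ideal.span {F 0}) := by
  have hFt : ∀ t : k, F t = psiH ε t f := fun t => by rw [hF t]; rfl
  have hF1 : F 1 = f := by rw [hFt, psiH_one]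
  set q := p ^ s with hq
  refine ⟨?_, ?_, ?_⟩
  · -- part 1
    intro d hde H1 t ht h hh
    have hh' : (psiH ε t⁻¹ h).IsHomogeneous d := psiH_isWeightedHomogeneous _ ε t⁻¹ hh
    obtain ⟨g, hg, hmem⟩ := H1 _ hh'
    refine ⟨psiH ε t g, psiH_isWeightedHomogeneous _ ε t hg, ?_⟩
    have hmem' : psiH ε t (psiH ε t⁻¹ h - F 1 * g) ∈ I := by
      rw [hI] at hmem ⊢
      exact psiH_mem_span ε t (fun g' hg' => stableXq ε t q g' hg') hmem
    rw [map_sub, map_mul, psiH_psiH, mul_inv_cancel₀ ht, psiH_one, hF1] at hmem'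
    rw [hFt t]
    exact hmem'
  · -- part 2
    intro t ht
    unfold vsoc
    congr 1
    ext d
    simp only [Set.mem_setOf_eq, not_iff_not]
    constructor
    · intro hle
      have := pow_le_move ε (inv_ne_zero ht) q d (psiH ε t f) (by rwa [hI, hFt t] at hle)
      rw [psiH_psiH, inv_mul_cancel₀ ht, psiH_one] at this
      rwa [hI, hF1]
    · intro hle
      have := pow_le_move ε ht q d f (by rwa [hI, hF1] at hle)
      rwa [hI, hFt t]
  · -- part 3
    have hsub : {d : ℕ | ¬ (Ideal.span (Set.range (X : Fin r → MvPolynomial (Fin r) k))) ^ d ≤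
          I ⊔ Ideal.span {F 1}} ⊆
        {d : ℕ | ¬ (Ideal.span (Set.range (X : Fin r → MvPolynomial (Fin r) k))) ^ d ≤
          I ⊔ Ideal.span {F 0}} := by
      intro d hd
      simp only [Set.mem_setOf_eq] at hd ⊢
      intro hle
      apply hd
      rw [hF1, hI]
      exact lemA ε q hf d (by rwa [hI, hFt 0] at hle)
    have hbdd : BddAbove {d : ℕ | ¬ (Ideal.span (Set.range (X : Fin r → MvPolynomial (Fin r) k))) ^ d ≤
        I ⊔ Ideal.span {F 0}} := by
      refine ⟨r * q, ?_⟩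
      intro d hd
      simp only [Set.mem_setOf_eq] at hd
      by_contra hcon
      push_neg at hcon
      exact hd (le_trans (by rw [hI]; exact pow_le_Iq q d hcon) le_sup_left)
    unfold vsoc
    rcases Set.eq_empty_or_nonempty
      {d : ℕ | ¬ (Ideal.span (Set.range (X : Fin r → MvPolynomial (Fin r) k))) ^ d ≤
        I ⊔ Ideal.span {F 1}} with hemp | hne
    · rw [hemp, csSup_empty]
      exact Nat.zero_le _
    · exact csSup_le_csSup hbdd hne hsub
end

section
/- Let n ≥ 1 and q ≥ 2, and consider the monomial quotient ring A = k[y_{ij} : 1 ≤ i ≤ j ≤ n−1]/⟨y_{ij}^q⟩ over a field k of odd characteristic p with q = p^s. Let D = det(Y) where Y is the symmetric (n−1)×(n−1) matrix with entries y_{min(i,j),max(i,j)}. Then D^{(q+1)/2} is nonzero in A; that is, det(Y)^{(q+1)/2} ∉ ⟨y_{ij}^q : 1 ≤ i ≤ j ≤ n−1⟩. -/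
open MvPolynomial

/-- In odd characteristic `p`, with `q = p ^ s ≥ 2` and `Y` the generic symmetric
`(n-1) × (n-1)` matrix in the variables `y_{ij}` (`i ≤ j`), the power `det(Y)^((q+1)/2)` is
nonzero in `k[y_{ij}]/⟨y_{ij}^q⟩`; that is, `det(Y)^((q+1)/2) ∉ ⟨y_{ij}^q⟩`. -/
theorem stmt_17 (k : Type*) [Field k] (p : ℕ) (hp : p.Prime) (hodd : Odd p) [CharP k p]
    (n : ℕ) (hn : 1 ≤ n) (s : ℕ) (hs : 1 ≤ s)
    (Y : Matrix (Fin (n - 1)) (Fin (n - 1))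
      (MvPolynomial {ij : Fin (n - 1) × Fin (n - 1) // ij.1 ≤ ij.2} k))
    (hY : ∀ i j, Y i j = X ⟨(min i j, max i j), min_le_max⟩) :
    Y.det ^ ((p ^ s + 1) / 2) ∉
      Ideal.span (Set.range fun v : {ij : Fin (n - 1) × Fin (n - 1) // ij.1 ≤ ij.2} =>
        (X v : MvPolynomial {ij : Fin (n - 1) × Fin (n - 1) // ij.1 ≤ ij.2} k) ^ p ^ s) := by
  classical
  intro hmem
  set q := p ^ s with hq
  have hq2 : 2 ≤ q := by
    calc 2 ≤ p := hp.two_le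
    _ ≤ p ^ s := Nat.le_self_pow (by omega) p
  set m := (q + 1) / 2 with hm
  have hmq : m < q := by omega
  set I : Ideal (MvPolynomial {ij : Fin (n - 1) × Fin (n - 1) // ij.1 ≤ ij.2} k) :=
    Ideal.span (Set.range fun v : {ij : Fin (n - 1) × Fin (n - 1) // ij.1 ≤ ij.2} =>
      (X v : MvPolynomial {ij : Fin (n - 1) × Fin (n - 1) // ij.1 ≤ ij.2} k) ^ q) with hI
  -- the substitution killing off-diagonal variables
  set φ : MvPolynomial {ij : Fin (n - 1) × Fin (n - 1) // ij.1 ≤ ij.2} k →ₐ[k]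
      MvPolynomial {ij : Fin (n - 1) × Fin (n - 1) // ij.1 ≤ ij.2} k :=
    aeval (fun v : {ij : Fin (n - 1) × Fin (n - 1) // ij.1 ≤ ij.2} =>
      if v.1.1 = v.1.2 then (X v : MvPolynomial {ij : Fin (n - 1) × Fin (n - 1) // ij.1 ≤ ij.2} k)
      else 0) with hφ
  -- φ maps I into I
  have hle : Ideal.map (φ : MvPolynomial {ij : Fin (n - 1) × Fin (n - 1) // ij.1 ≤ ij.2} k →+*
      MvPolynomial {ij : Fin (n - 1) × Fin (n - 1) // ij.1 ≤ ij.2} k) I ≤ I := by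
    rw [hI, Ideal.map_span]
    apply Ideal.span_le.mpr
    rintro x ⟨y, ⟨v, rfl⟩, rfl⟩
    simp only [map_pow, hφ, aeval_X, RingHom.coe_coe]
    split
    · exact Ideal.subset_span ⟨v, rfl⟩
    · rw [zero_pow (by omega)]
      exact I.zero_mem
  have h1 : φ (Y.det ^ m) ∈ I := hle (Ideal.mem_map_of_mem _ hmem)
  -- compute φ (det Y)
  have hdet : φ Y.det = ∏ i : Fin (n - 1),
      (X (⟨(i, i), le_rfl⟩ : {ij : Fin (n - 1) × Fin (n - 1) // ij.1 ≤ ij.2}) :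
        MvPolynomial {ij : Fin (n - 1) × Fin (n - 1) // ij.1 ≤ ij.2} k) := by
    rw [AlgHom.map_det, AlgHom.mapMatrix_apply]
    have hmap : Y.map φ = Matrix.diagonal fun i : Fin (n - 1) =>
        (X (⟨(i, i), le_rfl⟩ : {ij : Fin (n - 1) × Fin (n - 1) // ij.1 ≤ ij.2}) :
          MvPolynomial {ij : Fin (n - 1) × Fin (n - 1) // ij.1 ≤ ij.2} k) := by
      refine Matrix.ext fun i j => ?_
      rw [Matrix.map_apply, hY i j, hφ, aeval_X]
      by_cases hij : i = j
      · subst hij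
        simp [Matrix.diagonal]
      · have h1 : min i j ≠ max i j := fun h => hij (by
          rcases le_total i j with hle | hle
          · rw [min_eq_left hle, max_eq_right hle] at h; exact h
          · rw [min_eq_right hle, max_eq_left hle] at h; exact h.symm)
        simp [h1, Matrix.diagonal, hij]
    rw [hmap, Matrix.det_diagonal]
  -- so the pure diagonal monomial power lies in I
  have h2 : (monomial (∑ i : Fin (n - 1),
      Finsupp.single (⟨(i, i), le_rfl⟩ : {ij : Fin (n - 1) × Fin (n - 1) // ij.1 ≤ ij.2}) m)
      (1 : k)) ∈ I := by
    have heq : φ (Y.det ^ m) = monomial (∑ i : Fin (n - 1),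
        Finsupp.single (⟨(i, i), le_rfl⟩ : {ij : Fin (n - 1) × Fin (n - 1) // ij.1 ≤ ij.2}) m)
        (1 : k) := by
      rw [map_pow, hdet, ← Finset.prod_pow, monomial_sum_one]
      exact Finset.prod_congr rfl fun i _ => by rw [X_pow_eq_monomial]
    rwa [heq] at h1
  -- but I is a monomial ideal with all generators of degree q in some variable
  have hIeq : (Set.range fun v : {ij : Fin (n - 1) × Fin (n - 1) // ij.1 ≤ ij.2} =>
      (X v : MvPolynomial {ij : Fin (n - 1) × Fin (n - 1) // ij.1 ≤ ij.2} k) ^ q) =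
      (fun i => monomial i (1 : k)) ''
        (Set.range fun v : {ij : Fin (n - 1) × Fin (n - 1) // ij.1 ≤ ij.2} =>
          Finsupp.single v q) := by
    rw [← Set.range_comp]
    refine congrArg Set.range ?_
    funext v
    exact X_pow_eq_monomial
  rw [hI, hIeq, mem_ideal_span_monomial_image] at h2
  obtain ⟨si, ⟨v, rfl⟩, hsile⟩ := h2 (∑ i : Fin (n - 1),
      Finsupp.single (⟨(i, i), le_rfl⟩ : {ij : Fin (n - 1) × Fin (n - 1) // ij.1 ≤ ij.2}) m)
    (by simp [support_monomial])
  have hqle : q ≤ ∑ i : Fin (n - 1),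
      (Finsupp.single (⟨(i, i), le_rfl⟩ : {ij : Fin (n - 1) × Fin (n - 1) // ij.1 ≤ ij.2}) m)
        v := by
    have h3 := hsile v
    rw [Finsupp.finset_sum_apply] at h3
    rwa [Finsupp.single_eq_same] at h3
  have hsum : ∑ i : Fin (n - 1),
      (Finsupp.single (⟨(i, i), le_rfl⟩ : {ij : Fin (n - 1) × Fin (n - 1) // ij.1 ≤ ij.2}) m)
        v ≤ m := by
    rw [Finset.sum_eq_single (s := Finset.univ) (f := fun i : Fin (n - 1) =>
        (Finsupp.single (⟨(i, i), le_rfl⟩ : {ij : Fin (n - 1) × Fin (n - 1) // ij.1 ≤ ij.2}) m)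
          v) v.1.1
      (fun b _ hb => by
        simp only [Finsupp.single_apply]
        rw [if_neg]
        intro h
        exact hb (by simpa using congrArg (fun x => x.1.1) h))
      (fun h => absurd (Finset.mem_univ _) h)]
    simp only [Finsupp.single_apply]
    split <;> omega
  omega
end
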